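/- arXiv:2505.05997 — 4 statements merged into one kernel-verified Lean document; each statement's English description precedes it below -/
import Mathlib

section
/- For every red/blue coloring of the edges of the ordered complete graph K_n (vertices linearly ordered 1 < 2 < ... < n), there exists a partition of the vertex set into at least 2^(√(log n) − 1) intervals such that between any two of these intervals there is at least one edge of a single fixed color (i.e., a monochromatic complete interval minor of size 2^(√(log n) − 1)), where log denotes the base-2 logarithm. -/
open Real

namespace IntervalMinor

/-- A monochromatic complete interval minor of the coloring `c` restricted to
the interval `[a, b)` of `ℕ`, of color `col` and size `t`. -/
def Minor (c : ℕ → ℕ → Bool) (col : Bool) (a b t : ℕ) : Prop :=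
  ∃ x : ℕ → ℕ, x 0 = a ∧ x t = b ∧ (∀ i < t, x i < x (i+1)) ∧
    ∀ i j, i < j → j < t → ∃ u v, x i ≤ u ∧ u < x (i+1) ∧ x j ≤ v ∧ v < x (j+1) ∧ c u v = col

lemma xmono {x : ℕ → ℕ} {t : ℕ} (h : ∀ i < t, x i < x (i+1)) :
    ∀ i j, i ≤ j → j ≤ t → x i ≤ x j := by
  have key : ∀ d i, i + d ≤ t → x i ≤ x (i + d) := by
    intro d
    induction d with
    | zero => intro i _; exact le_rfl
    | succ d ih =>
      intro i hi
      have h1 := ih i (by omega)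
      have h2 : x (i+d) < x (i+d+1) := h (i+d) (by omega)
      have h3 : i + (d+1) = i + d + 1 := by omega
      rw [h3]
      omega
  intro i j hij hjt
  have h3 := key (j - i) i (by omega)
  have he : i + (j - i) = j := by omega
  rwa [he] at h3

lemma minor_one {c col a b} (hab : a < b) : Minor c col a b 1 := by
  refine ⟨fun i => if i = 0 then a else b, by norm_num, by norm_num, ?_, ?_⟩
  · intro i hi
    interval_cases i
    norm_num
    exact hab
  · intro i j hij hj; omega

lemma minor_extend_left {c col a b t} (h : Minor c col a b t) (ht : 1 ≤ t) {a' : ℕ}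
    (ha : a' ≤ a) : Minor c col a' b t := by
  obtain ⟨x, hx0, hxt, hs, hp⟩ := h
  set x' : ℕ → ℕ := fun i => if i = 0 then a' else x i with hx'
  have he : ∀ i, i ≠ 0 → x' i = x i := by
    intro i h; simp only [hx']; rw [if_neg h]
  have he0 : x' 0 = a' := by simp [hx']
  have hle : ∀ i, x' i ≤ x i := by
    intro i
    rcases Nat.eq_zero_or_pos i with rfl | hpos
    · rw [he0, hx0]; exact ha
    · rw [he i (by omega)]
  refine ⟨x', he0, by rw [he t (by omega)]; exact hxt, ?_, ?_⟩
  · intro i hi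
    rw [he (i+1) (by omega)]
    exact lt_of_le_of_lt (hle i) (hs i hi)
  · intro i j hij hj
    obtain ⟨u, v, h1, h2, h3, h4, h5⟩ := hp i j hij hj
    refine ⟨u, v, (hle i).trans h1, ?_, (hle j).trans h3, ?_, h5⟩
    · rw [he (i+1) (by omega)]; exact h2
    · rw [he (j+1) (by omega)]; exact h4

lemma minor_extend_right {c col a b t} (h : Minor c col a b t) (ht : 1 ≤ t) {b' : ℕ}
    (hb : b ≤ b') : Minor c col a b' t := by
  obtain ⟨x, hx0, hxt, hs, hp⟩ := h
  set x' : ℕ → ℕ := fun i => if i = t then b' else x i with hx'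
  have he : ∀ i, i ≠ t → x' i = x i := by
    intro i h; simp only [hx']; rw [if_neg h]
  have het : x' t = b' := by simp [hx']
  have hge : ∀ i, x i ≤ x' i := by
    intro i
    by_cases h : i = t
    · subst h; rw [het, hxt]; exact hb
    · rw [he i h]
  refine ⟨x', by rw [he 0 (by omega)]; exact hx0, het, ?_, ?_⟩
  · intro i hi
    rw [he i (by omega)]
    exact lt_of_lt_of_le (hs i hi) (hge (i+1))
  · intro i j hij hj
    obtain ⟨u, v, h1, h2, h3, h4, h5⟩ := hp i j hij hj
    refine ⟨u, v, ?_, lt_of_lt_of_le h2 (hge (i+1)), ?_, lt_of_lt_of_le h4 (hge (j+1)), h5⟩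
    · rw [he i (by omega)]; exact h1
    · rw [he j (by omega)]; exact h3

lemma minor_glue {c col a b a' b' t₁ t₂} (h1 : Minor c col a b t₁) (h2 : Minor c col a' b' t₂)
    (hba : b ≤ a') (ht1 : 1 ≤ t₁) (ht2 : 1 ≤ t₂)
    (hall : ∀ u v, a ≤ u → u < b → a' ≤ v → v < b' → c u v = col) :
    Minor c col a b' (t₁ + t₂) := by
  obtain ⟨x, hx0, hxt, hxs, hxp⟩ := h1
  obtain ⟨y, hy0, hyt, hys, hyp⟩ := h2
  have hxm := xmono hxs
  have hym := xmono hys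
  set z : ℕ → ℕ := fun i => if i ≤ t₁ then x i else y (i - t₁) with hz
  have hz1 : ∀ i, i ≤ t₁ → z i = x i := by
    intro i h; simp only [hz]; rw [if_pos h]
  have hz2 : ∀ i, t₁ < i → z i = y (i - t₁) := by
    intro i h; simp only [hz]; rw [if_neg (by omega)]
  have hkey : ∀ i, t₁ ≤ i → z i ≤ y (i - t₁) := by
    intro i h
    rcases Nat.eq_or_lt_of_le h with heq | hlt
    · rw [← heq, hz1 _ le_rfl, Nat.sub_self, hxt, hy0]; exact hba
    · rw [hz2 _ hlt]
  have hsucc : ∀ i, t₁ ≤ i → z (i+1) = y (i - t₁ + 1) := by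
    intro i h
    rw [hz2 _ (by omega)]
    congr 1
    omega
  refine ⟨z, by rw [hz1 0 (by omega), hx0], ?_, ?_, ?_⟩
  · rw [hz2 _ (by omega)]
    have h' : t₁ + t₂ - t₁ = t₂ := by omega
    rw [h', hyt]
  · intro i hi
    rcases lt_or_ge i t₁ with hlt | hge
    · rw [hz1 i (by omega), hz1 (i+1) (by omega)]
      exact hxs i hlt
    · calc z i ≤ y (i - t₁) := hkey i hge
        _ < y (i - t₁ + 1) := hys _ (by omega)
        _ = z (i+1) := (hsucc i hge).symm
  · intro i j hij hj
    rcases lt_or_ge j t₁ with hjlt | hjge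
    · obtain ⟨u, v, g1, g2, g3, g4, g5⟩ := hxp i j hij hjlt
      rw [← hz1 i (by omega)] at g1
      rw [← hz1 (i+1) (by omega)] at g2
      rw [← hz1 j (by omega)] at g3
      rw [← hz1 (j+1) (by omega)] at g4
      exact ⟨u, v, g1, g2, g3, g4, g5⟩
    · rcases lt_or_ge i t₁ with hilt | hige
      · refine ⟨x i, y (j - t₁), ?_, ?_, ?_, ?_, ?_⟩
        · rw [hz1 i (by omega)]
        · rw [hz1 (i+1) (by omega)]; exact hxs i hilt
        · exact hkey j hjge
        · rw [hsucc j hjge]; exact hys _ (by omega)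
        · refine hall _ _ ?_ ?_ ?_ ?_
          · rw [← hx0]; exact hxm 0 i (by omega) (by omega)
          · rw [← hxt]; exact lt_of_lt_of_le (hxs i hilt) (hxm (i+1) t₁ (by omega) le_rfl)
          · rw [← hy0]; exact hym 0 (j - t₁) (by omega) (by omega)
          · rw [← hyt]
            exact lt_of_lt_of_le (hys (j - t₁) (by omega)) (hym _ t₂ (by omega) le_rfl)
      · obtain ⟨u, v, g1, g2, g3, g4, g5⟩ := hyp (i - t₁) (j - t₁) (by omega) (by omega)
        refine ⟨u, v, (hkey i hige).trans g1, ?_, (hkey j hjge).trans g3, ?_, g5⟩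
        · rw [hsucc i hige]; exact g2
        · rw [hsucc j hjge]; exact g4

lemma minor_blocks {c : ℕ → ℕ → Bool} {col : Bool} {t : ℕ} (ht : 1 ≤ t) (L R : ℕ → ℕ)
    (h1 : ∀ i < t, L i < R i) (h2 : ∀ i, i + 1 < t → R i ≤ L (i+1))
    (h3 : ∀ i j, i < j → j < t →
      ∃ u v, L i ≤ u ∧ u < R i ∧ L j ≤ v ∧ v < R j ∧ c u v = col) :
    Minor c col (L 0) (R (t-1)) t := by
  set w : ℕ → ℕ := fun i => if i = 0 then L 0 else if i = t then R (t-1) else L i with hw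
  have hw0 : w 0 = L 0 := by simp [hw]
  have hwt : w t = R (t-1) := by
    simp only [hw]; rw [if_neg (by omega : t ≠ 0)]; simp
  have hle : ∀ i < t, w i ≤ L i := by
    intro i hi
    rcases Nat.eq_zero_or_pos i with rfl | hpos
    · exact hw0.le
    · simp only [hw]; rw [if_neg (by omega), if_neg (by omega)]
  have hge : ∀ i < t, R i ≤ w (i+1) := by
    intro i hi
    rcases Nat.eq_or_lt_of_le (Nat.succ_le_of_lt hi) with heq | hlt
    · simp only [hw]; rw [if_neg (by omega : i + 1 ≠ 0), if_pos heq]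
      have h' : t - 1 = i := by omega
      rw [h']
    · simp only [hw]; rw [if_neg (by omega), if_neg (by omega)]
      exact h2 i hlt
  refine ⟨w, hw0, hwt, ?_, ?_⟩
  · intro i hi
    exact lt_of_le_of_lt (hle i hi) (lt_of_lt_of_le (h1 i hi) (hge i hi))
  · intro i j hij hj
    obtain ⟨u, v, g1, g2, g3, g4, g5⟩ := h3 i j hij hj
    exact ⟨u, v, (hle i (by omega)).trans g1, g2.trans_le (hge i (by omega)),
      (hle j hj).trans g3, g4.trans_le (hge j hj), g5⟩

/-- The size threshold sequence. -/
def Nfun : ℕ → ℕ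
  | 0 => 1
  | 1 => 2
  | (k+2) => 2^(k+3) * Nfun (k+1)

lemma Nfun_succ_succ (k : ℕ) : Nfun (k+2) = 2^(k+3) * Nfun (k+1) := rfl

lemma Nfun_pos : ∀ k, 1 ≤ Nfun k := by
  intro k
  match k with
  | 0 => exact le_rfl
  | 1 => norm_num [Nfun]
  | (k+2) =>
    have h1 := Nfun_pos (k+1)
    rw [Nfun_succ_succ]
    exact Nat.one_le_iff_ne_zero.mpr (by positivity)

lemma two_pow_le_Nfun : ∀ k, 2^k ≤ Nfun k := by
  intro k
  match k with
  | 0 => norm_num [Nfun]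
  | 1 => norm_num [Nfun]
  | (k+2) =>
    have ih := two_pow_le_Nfun (k+1)
    calc 2^(k+2) ≤ 2^(k+3) := Nat.pow_le_pow_right (by norm_num) (by omega)
      _ = 2^(k+3) * 1 := (mul_one _).symm
      _ ≤ 2^(k+3) * Nfun (k+1) := Nat.mul_le_mul_left _ (Nfun_pos _)
      _ = Nfun (k+2) := (Nfun_succ_succ k).symm

lemma Nfun_le_pow : ∀ k, Nfun (k+1) ≤ 2^((k+1)^2) := by
  intro k
  match k with
  | 0 => norm_num [Nfun]
  | (k+1) =>
    have ih := Nfun_le_pow k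
    calc Nfun (k+2) = 2^(k+3) * Nfun (k+1) := Nfun_succ_succ k
      _ ≤ 2^(k+3) * 2^((k+1)^2) := Nat.mul_le_mul_left _ ih
      _ = 2^((k+1)^2 + (k+3)) := by rw [← pow_add]; ring_nf
      _ ≤ 2^((k+2)^2) := Nat.pow_le_pow_right (by norm_num) (by nlinarith)

/-- Main combinatorial lemma. -/
lemma main : ∀ k (c : ℕ → ℕ → Bool) (a b : ℕ), a + Nfun k ≤ b →
    ∃ col, Minor c col a b (2^k) := by
  intro k
  induction k with
  | zero =>
    intro c a b hab
    have hab' : a < b := by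
      have h := hab
      simp only [Nfun] at h
      omega
    refine ⟨true, ?_⟩
    rw [pow_zero]
    exact minor_one hab'
  | succ k ih =>
    match k with
    | 0 =>
      intro c a b hab
      have hab' : a + 2 ≤ b := by
        have h := hab
        simp only [Nfun] at h
        omega
      have hpow : (2:ℕ)^(0+1) = 2 := by norm_num
      rw [hpow]
      refine ⟨c a (a+1),
        fun i => if i = 0 then a else if i = 1 then a + 1 else b, by norm_num, by norm_num, ?_, ?_⟩
      · intro i hi
        interval_cases i <;> norm_num <;> omega
      · intro i j hij hj
        have hij' : i = 0 ∧ j = 1 := by omega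
        obtain ⟨rfl, rfl⟩ := hij'
        refine ⟨a, a+1, by norm_num, by norm_num, by norm_num, by norm_num; omega, rfl⟩
    | (k+1) =>
      intro c a b hab
      set s := Nfun (k+1) with hs
      have hspos : 1 ≤ s := Nfun_pos _
      set m := 2^(k+3) with hm
      have hab' : a + m * s ≤ b := by
        rw [show m * s = Nfun (k+2) from (Nfun_succ_succ k).symm]
        exact hab
      have hmul : ∀ p q : ℕ, p < q → a + p * s + s ≤ a + q * s := by
        intro p q hpq
        have h1 : (p+1) * s ≤ q * s := Nat.mul_le_mul_right _ (by omega)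
        have h2 : (p+1) * s = p * s + s := by ring
        omega
      have hub : ∀ p : ℕ, p < m → a + p * s + s ≤ b := by
        intro p hp
        have h1 : (p+1) * s ≤ m * s := Nat.mul_le_mul_right _ (by omega)
        have h2 : (p+1) * s = p * s + s := by ring
        omega
      have H : ∀ i : ℕ, ∃ col, Minor c col (a + i*s) (a + i*s + s) (2^(k+1)) :=
        fun i => ih c _ _ (by omega)
      choose colOf hcol using H
      have hpigeon : ∃ col, 2^(k+2) ≤
          ((Finset.range m).filter (fun i => colOf i = col)).card := by
        by_contra hcon
        push_neg at hcon
        have h1 := hcon true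
        have h2 := hcon false
        have hsum := Finset.card_filter_add_card_filter_not
          (s := Finset.range m) (p := fun i => colOf i = true)
        have hrw : (Finset.range m).filter (fun i => ¬ colOf i = true) =
            (Finset.range m).filter (fun i => colOf i = false) := by
          apply Finset.filter_congr
          intro i _
          simp [Bool.not_eq_true]
        rw [hrw] at hsum
        have hcard : (Finset.range m).card = 2^(k+3) := by simp [hm]
        have hpow : (2:ℕ)^(k+3) = 2^(k+2) + 2^(k+2) := by ring
        omega
      obtain ⟨col, hS⟩ := hpigeon
      set S := (Finset.range m).filter (fun i => colOf i = col) with hSdef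
      have hmemS : ∀ i ∈ S, i < m ∧ colOf i = col := by
        intro i hi
        simp only [hSdef, Finset.mem_filter, Finset.mem_range] at hi
        exact hi
      have h1le : (1:ℕ) ≤ 2^(k+1) := Nat.one_le_two_pow
      have h2le : (1:ℕ) ≤ 2^(k+2) := Nat.one_le_two_pow
      by_cases hcase : ∃ i ∈ S, ∃ j ∈ S, i < j ∧
          ∀ u v, a + i*s ≤ u → u < a + i*s + s → a + j*s ≤ v → v < a + j*s + s → c u v = col
      · obtain ⟨i, hi, j, hj, hij, hall⟩ := hcase
        obtain ⟨him, hicol⟩ := hmemS i hi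
        obtain ⟨hjm, hjcol⟩ := hmemS j hj
        have mi : Minor c col (a + i*s) (a + i*s + s) (2^(k+1)) := hicol ▸ hcol i
        have mj : Minor c col (a + j*s) (a + j*s + s) (2^(k+1)) := hjcol ▸ hcol j
        have hglue := minor_glue mi mj (hmul i j hij) h1le h1le hall
        have h2 : (2:ℕ)^(k+1) + 2^(k+1) = 2^(k+2) := by ring
        rw [h2] at hglue
        have hext1 := minor_extend_left hglue h2le (by omega : a ≤ a + i * s)
        exact ⟨col, minor_extend_right hext1 h2le (hub j hjm)⟩
      · push_neg at hcase
        set T := (2:ℕ)^(k+2) with hT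
        have hTcard : T ≤ S.card := hS
        set g := S.orderEmbOfCardLe hTcard with hg
        have hgmem : ∀ i : Fin T, g i ∈ S := fun i => S.orderEmbOfCardLe_mem hTcard i
        set gg : ℕ → ℕ := fun i => if h : i < T then g ⟨i, h⟩ else 0 with hgg
        have hggeq : ∀ i (h : i < T), gg i = g ⟨i, h⟩ := by
          intro i h; simp only [hgg]; rw [dif_pos h]
        have hggmono : ∀ i j, i < j → j < T → gg i < gg j := by
          intro i j hij hj
          rw [hggeq i (by omega), hggeq j hj]
          exact g.strictMono (by exact Fin.mk_lt_mk.mpr hij)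
        have hggS : ∀ i, i < T → gg i ∈ S := by
          intro i hi
          rw [hggeq i hi]
          exact hgmem _
        have hblocks := minor_blocks (c := c) (col := !col) (t := T) h2le
          (fun i => a + gg i * s) (fun i => a + gg i * s + s)
          (by intro i _; show a + gg i * s < a + gg i * s + s; omega)
          (by
            intro i hi
            show a + gg i * s + s ≤ a + gg (i+1) * s
            exact hmul _ _ (hggmono i (i+1) (by omega) hi))
          (by
            intro i j hij hj
            obtain ⟨u, v, g1, g2, g3, g4, g5⟩ := hcase (gg i) (hggS i (by omega))
              (gg j) (hggS j hj) (hggmono i j hij hj)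
            refine ⟨u, v, g1, g2, g3, g4, ?_⟩
            cases hc : c u v <;> cases col <;> simp_all)
        have hext1 := minor_extend_left hblocks h2le (by omega : a ≤ a + gg 0 * s)
        refine ⟨!col, minor_extend_right hext1 h2le ?_⟩
        exact hub _ (hmemS _ (hggS (T-1) (by omega))).1

end IntervalMinor

/-- For every red/blue coloring (`Bool`-valued, symmetric) of the edges of the
ordered complete graph `K_n`, there is a monochromatic complete interval minor
of size at least `2^(√(log₂ n) − 1)`: a color `col` and a partition of `Fin n`
into `t ≥ 2^(√(log₂ n) − 1)` nonempty intervals (encoded by a monotone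
surjection) such that between any two distinct intervals there is an edge of
color `col`. -/
theorem stmt1 {n : ℕ} (hn : 1 ≤ n) (c : Fin n → Fin n → Bool)
    (hsym : ∀ u v : Fin n, c u v = c v u) :
    ∃ (col : Bool) (t : ℕ) (f : Fin n → Fin t),
      (2 : ℝ) ^ (Real.sqrt (Real.logb 2 n) - 1) ≤ (t : ℝ) ∧
      Monotone f ∧ Function.Surjective f ∧
      ∀ i j : Fin t, i ≠ j →
        ∃ u v : Fin n, f u = i ∧ f v = j ∧ u ≠ v ∧ c u v = col := by
  classical
  have hP0 : IntervalMinor.Nfun 0 ≤ n := by simpa [IntervalMinor.Nfun] using hn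
  set k := Nat.findGreatest (fun j => IntervalMinor.Nfun j ≤ n) n with hk
  have hk1 : IntervalMinor.Nfun k ≤ n :=
    Nat.findGreatest_spec (P := fun j => IntervalMinor.Nfun j ≤ n) (Nat.zero_le n) hP0
  have hk2 : n < IntervalMinor.Nfun (k+1) := by
    rcases le_or_gt (k+1) n with h | h
    · by_contra hcon
      push_neg at hcon
      exact Nat.findGreatest_is_greatest (P := fun j => IntervalMinor.Nfun j ≤ n)
        (Nat.lt_succ_self k) h hcon
    · have h1 := IntervalMinor.two_pow_le_Nfun (k+1)
      have h2 := Nat.lt_two_pow_self (n := k+1)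
      omega
  -- the coloring on ℕ
  set c' : ℕ → ℕ → Bool :=
    fun u v => if hu : u < n then if hv : v < n then c ⟨u, hu⟩ ⟨v, hv⟩ else false else false
    with hc'
  obtain ⟨col, hminor⟩ := IntervalMinor.main k c' 0 n (by omega)
  obtain ⟨x, hx0, hxt, hxs, hxp⟩ := hminor
  have hxm := IntervalMinor.xmono hxs
  set t := (2:ℕ)^k with htdef
  have ht1 : 1 ≤ t := Nat.one_le_two_pow
  -- inverse map
  set g : ℕ → ℕ := fun v => Nat.findGreatest (fun i => x i ≤ v) t with hg
  have hgle : ∀ v, x (g v) ≤ v := by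
    intro v
    exact Nat.findGreatest_spec (P := fun i => x i ≤ v) (Nat.zero_le t)
      (by show x 0 ≤ v; rw [hx0]; exact Nat.zero_le v)
  have hglt : ∀ v, v < n → g v < t := by
    intro v hv
    have h1 : g v ≤ t := Nat.findGreatest_le (P := fun i => x i ≤ v) t
    rcases Nat.eq_or_lt_of_le h1 with heq | hlt
    · exfalso
      have h2 := hgle v
      rw [heq, hxt] at h2
      omega
    · exact hlt
  have hchar : ∀ i v, i < t → x i ≤ v → v < x (i+1) → g v = i := by
    intro i v hi hle hlt
    have h1 : i ≤ g v := Nat.le_findGreatest (P := fun j => x j ≤ v) (by omega) hle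
    have h2 : g v ≤ i := by
      by_contra hcon
      push_neg at hcon
      have h3 : x (i+1) ≤ x (g v) := hxm (i+1) (g v) (by omega)
        (Nat.findGreatest_le (P := fun j => x j ≤ v) t)
      have h4 := hgle v
      omega
    omega
  have hbnd : ∀ i, i < t → x (i+1) ≤ n := by
    intro i hi
    rw [← hxt]
    exact hxm (i+1) t (by omega) le_rfl
  refine ⟨col, t, fun v => ⟨g v.val, hglt _ v.isLt⟩, ?_, ?_, ?_, ?_⟩
  · -- numeric bound
    have hnle : (n:ℝ) ≤ (2:ℝ)^(((k+1)^2 : ℕ)) := by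
      have h1 : n ≤ 2^((k+1)^2) := le_trans (le_of_lt hk2) (IntervalMinor.Nfun_le_pow k)
      exact_mod_cast h1
    have hlogb : Real.logb 2 n ≤ ((k+1:ℕ)^2 : ℝ) := by
      calc Real.logb 2 n ≤ Real.logb 2 ((2:ℝ)^(((k+1)^2 : ℕ))) :=
            Real.logb_le_logb_of_le (by norm_num) (by exact_mod_cast hn) hnle
        _ = ((k+1:ℕ)^2 : ℝ) := by
            rw [← Real.rpow_natCast 2 ((k+1)^2), Real.logb_rpow (by norm_num) (by norm_num)]
            push_cast
            ring
    have hsq : Real.sqrt (Real.logb 2 n) ≤ (k:ℝ) + 1 := by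
      have h1 : Real.sqrt (Real.logb 2 n) ≤ Real.sqrt (((k:ℝ)+1)^2) := by
        apply Real.sqrt_le_sqrt
        push_cast at hlogb
        linarith
      rwa [Real.sqrt_sq (by positivity)] at h1
    calc (2:ℝ) ^ (Real.sqrt (Real.logb 2 n) - 1) ≤ (2:ℝ) ^ ((k:ℝ)) :=
          Real.rpow_le_rpow_of_exponent_le (by norm_num) (by linarith)
      _ = ((t:ℕ):ℝ) := by
          rw [Real.rpow_natCast, htdef]
          push_cast
          ring
  · -- monotone
    intro v w hvw
    simp only [Fin.mk_le_mk]
    by_contra hcon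
    push_neg at hcon
    have h1 : ¬ x (g v.val) ≤ w.val :=
      Nat.findGreatest_is_greatest (P := fun i => x i ≤ w.val) hcon
        (Nat.findGreatest_le (P := fun i => x i ≤ v.val) t)
    exact h1 (le_trans (hgle v.val) hvw)
  · -- surjective
    intro i
    have hvn : x i.val < n := by
      have h1 := hbnd i.val i.isLt
      have h2 := hxs i.val i.isLt
      omega
    refine ⟨⟨x i.val, hvn⟩, ?_⟩
    apply Fin.ext
    exact hchar i.val (x i.val) i.isLt le_rfl (hxs i.val i.isLt)
  · -- edges
    intro i j hij
    have hmain : ∀ i j : Fin t, (i:ℕ) < (j:ℕ) → ∃ u v : Fin n,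
        (⟨g u.val, hglt _ u.isLt⟩ : Fin t) = i ∧ (⟨g v.val, hglt _ v.isLt⟩ : Fin t) = j ∧
        u.val < v.val ∧ c u v = col := by
      intro i j hij'
      obtain ⟨u, v, g1, g2, g3, g4, g5⟩ := hxp i.val j.val hij' j.isLt
      have hun : u < n := by
        have := hbnd i.val (by omega) -- i < t since i < j ≤ t
        omega
      have hvn : v < n := by
        have := hbnd j.val j.isLt
        omega
      have huv : u < v := by
        have h1 : x (i.val+1) ≤ x j.val := hxm _ _ (by omega) (by omega)
        omega
      refine ⟨⟨u, hun⟩, ⟨v, hvn⟩, ?_, ?_, huv, ?_⟩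
      · apply Fin.ext
        exact hchar i.val u (by omega) g1 g2
      · apply Fin.ext
        exact hchar j.val v j.isLt g3 g4
      · simp only [hc'] at g5
        rw [dif_pos hun, dif_pos hvn] at g5
        exact g5
    rcases lt_or_gt_of_ne (fun h => hij h) with h | h
    · obtain ⟨u, v, e1, e2, e3, e4⟩ := hmain i j h
      exact ⟨u, v, e1, e2, fun he => by rw [he] at e3; omega, e4⟩
    · obtain ⟨u, v, e1, e2, e3, e4⟩ := hmain j i h
      refine ⟨v, u, e2, e1, fun he => by rw [he] at e3; omega, ?_⟩
      rw [hsym]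
      exact e4
end

section
/- Let (T, <) be an ordered rooted tree and let \mathcal{I} be an interval family of (T, <) of size at least 2(b+2)^t. Then either T contains a b-branching node, or there is a t-interval path in T. -/
set_option linter.unusedSectionVars false
set_option linter.unusedVariables false
set_option maxHeartbeats 1000000

attribute [local instance] Classical.propDecidable


/-- A node `x` is a leaf of the rooted tree given by the parent function
(the root is its own parent, so a leaf is a node with no child other than
possibly itself). -/
def IsTreeLeaf {node : Type*} (parent : node → node) (x : node) : Prop :=
  ∀ y : node, parent y = x → y = x

/-- `x` is a (not necessarily proper) ancestor of `y`. -/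
def TreeAnc {node : Type*} (parent : node → node) (x y : node) : Prop :=
  ∃ k : ℕ, parent^[k] y = x

/-- The set of leaf descendants of a node `x`. -/
def leafSet {node : Type*} (parent : node → node) (x : node) : Set node :=
  {l | IsTreeLeaf parent l ∧ TreeAnc parent x l}

section Basics

variable {node : Type} [Fintype node] [LinearOrder node]

lemma anc_refl (parent : node → node) (x : node) : TreeAnc parent x x := ⟨0, rfl⟩

lemma anc_trans {parent : node → node} {x y w : node}
    (h1 : TreeAnc parent x y) (h2 : TreeAnc parent y w) : TreeAnc parent x w := by
  obtain ⟨k, hk⟩ := h1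
  obtain ⟨m, hm⟩ := h2
  exact ⟨k + m, by rw [Function.iterate_add_apply, hm, hk]⟩

lemma leafSet_mono {parent : node → node} {x y : node} (h : TreeAnc parent x y) :
    leafSet parent y ⊆ leafSet parent x := fun l hl => ⟨hl.1, anc_trans h hl.2⟩

lemma anc_child {parent : node → node} {x y : node} (h : parent y = x) : TreeAnc parent x y :=
  ⟨1, h⟩

lemma root_fix {parent : node → node} {root : node} (hroot : parent root = root) (k : ℕ) :
    parent^[k] root = root := by
  induction k with
  | zero => rfl
  | succ n ih => rw [Function.iterate_succ_apply, hroot, ih]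

lemma cycle_root {parent : node → node} {root : node} (hroot : parent root = root)
    (hreach : ∀ x : node, ∃ k : ℕ, parent^[k] x = root) {x : node} {k : ℕ}
    (hk : parent^[k] x = x) (hkpos : 0 < k) : x = root := by
  obtain ⟨m, hm⟩ := hreach x
  have hiter : ∀ q : ℕ, parent^[q * k] x = x := by
    intro q
    induction q with
    | zero => simp
    | succ n ih => rw [Nat.succ_mul, Function.iterate_add_apply, hk, ih]
  have hle : m ≤ m * k := Nat.le_mul_of_pos_right m hkpos
  have h2 : parent^[m * k - m] (parent^[m] x) = x := by
    rw [← Function.iterate_add_apply, show m * k - m + m = m * k from by omega, hiter m]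
  rw [hm, root_fix hroot] at h2
  exact h2.symm

lemma child_not_anc {parent : node → node} {root : node} (hroot : parent root = root)
    (hreach : ∀ x : node, ∃ k : ℕ, parent^[k] x = root) {x y : node}
    (hy : parent y = x) (hyx : y ≠ x) : ¬ TreeAnc parent y x := by
  rintro ⟨k, hk⟩
  have hcyc : parent^[k + 1] x = x := by rw [Function.iterate_succ_apply', hk, hy]
  have hxr : x = root := cycle_root hroot hreach hcyc (by omega)
  apply hyx
  rw [← hk, hxr, root_fix hroot]

lemma child_disj {parent : node → node} {root : node} (hroot : parent root = root)
    (hreach : ∀ x : node, ∃ k : ℕ, parent^[k] x = root) {x y y' l : node}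
    (hy : parent y = x) (hyx : y ≠ x) (hy' : parent y' = x) (hy'x : y' ≠ x)
    (hyy' : y ≠ y') (hl : l ∈ leafSet parent y) (hl' : l ∈ leafSet parent y') : False := by
  have aux : ∀ (u u' : node) (k k' : ℕ), k ≤ k' → parent u = x → parent u' = x → u' ≠ x →
      parent^[k] l = u → parent^[k'] l = u' → u = u' := by
    intro u u' k k' hkk hu hu' hu'x hk hk'
    have h1 : parent^[k' - k] u = u' := by
      rw [← hk, ← Function.iterate_add_apply, show k' - k + k = k' from by omega, hk']
    rcases Nat.eq_zero_or_pos (k' - k) with h0 | hpos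
    · rw [h0] at h1; exact h1
    · obtain ⟨j, hj⟩ : ∃ j, k' - k = j + 1 := ⟨k' - k - 1, by omega⟩
      rw [hj, Function.iterate_succ_apply, hu] at h1
      rcases Nat.eq_zero_or_pos j with hj0 | hjpos
      · rw [hj0] at h1; exact (hu'x h1.symm).elim
      · have hcyc : parent^[j + 1] x = x := by
          rw [Function.iterate_succ_apply', h1, hu']
        have hxr := cycle_root hroot hreach hcyc (by omega)
        exfalso; apply hu'x; rw [← h1, hxr, root_fix hroot]
  obtain ⟨k, hk⟩ := hl.2
  obtain ⟨k', hk'⟩ := hl'.2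
  rcases le_total k k' with h | h
  · exact hyy' (aux y y' k k' h hy hy' hy'x hk hk')
  · exact hyy' ((aux y' y k' k h hy' hy hyx hk' hk).symm)

end Basics

section Key

variable {node : Type} [Fintype node] [LinearOrder node]

lemma mn_spec {𝓘 : Finset (Set node)} (hne : ∀ S ∈ 𝓘, S.Nonempty) (root : node)
    {S : Set node} (hS : S ∈ 𝓘) :
    (if h : S.toFinset.Nonempty then S.toFinset.min' h else root) ∈ S ∧
      ∀ s ∈ S, (if h : S.toFinset.Nonempty then S.toFinset.min' h else root) ≤ s := by
  have hSne : S.toFinset.Nonempty := by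
    rw [Set.toFinset_nonempty]; exact hne S hS
  rw [dif_pos hSne]
  constructor
  · exact Set.mem_toFinset.1 (S.toFinset.min'_mem hSne)
  · intro s hs
    exact S.toFinset.min'_le s (Set.mem_toFinset.2 hs)

lemma keyBound (root : node) (parent : node → node)
    (hroot : parent root = root)
    (hreach : ∀ x : node, ∃ k : ℕ, parent^[k] x = root)
    (hord : ∀ (x a b c : node), a ∈ leafSet parent x → c ∈ leafSet parent x →
      IsTreeLeaf parent b → a ≤ b → b ≤ c → b ∈ leafSet parent x)
    (c : ℕ) (𝓘 : Finset (Set node))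
    (hleaf : ∀ S ∈ 𝓘, ∀ x ∈ S, IsTreeLeaf parent x)
    (hint : ∀ S ∈ 𝓘, ∀ a ∈ S, ∀ c' ∈ S, ∀ x : node,
      IsTreeLeaf parent x → a ≤ x → x ≤ c' → x ∈ S)
    (hdisj : ∀ S ∈ 𝓘, ∀ S' ∈ 𝓘, S ≠ S' → S ∩ S' = ∅)
    (hne : ∀ S ∈ 𝓘, S.Nonempty)
    (hnb : ∀ (x : node) (𝓘' : Finset (Set node)), 𝓘' ⊆ 𝓘 → c + 2 ≤ 𝓘'.card →
      (∀ S ∈ 𝓘', S ⊆ leafSet parent x) →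
      ∃ y, parent y = x ∧ y ≠ x ∧ ∃ S ∈ 𝓘', ∃ S' ∈ 𝓘', S ≠ S' ∧
        (leafSet parent y ∩ S).Nonempty ∧ (leafSet parent y ∩ S').Nonempty)
    (x' : node) (m : ℕ)
    (hchild : ∀ y : node, parent y = x' → y ≠ x' →
      (𝓘.filter (fun S => S ⊆ leafSet parent y)).card ≤ m) :
    (𝓘.filter (fun S => S ⊆ leafSet parent x')).card ≤ (c + 1) * m + (2 * c + 2) := by
  classical
  set Χ : Finset (Set node) := 𝓘.filter (fun S => S ⊆ leafSet parent x' ∧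
      ∀ y : node, parent y = x' → y ≠ x' → ¬ S ⊆ leafSet parent y) with hΧdef
  set C : Finset node := Finset.univ.filter (fun y => parent y = x' ∧ y ≠ x' ∧
      (𝓘.filter (fun S => S ⊆ leafSet parent y)).Nonempty) with hCdef
  -- children with intervals are few
  have claimC : C.card ≤ c + 1 := by
    by_contra hcon
    push_neg at hcon
    obtain ⟨C'', hsub, hcard⟩ := Finset.exists_subset_card_eq (s := C) (n := c + 2) (by omega)
    have hch : ∀ y ∈ C'', ∃ S, S ∈ 𝓘 ∧ S ⊆ leafSet parent y := by
      intro y hy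
      obtain ⟨S, hS⟩ := (Finset.mem_filter.1 (hsub hy)).2.2.2
      exact ⟨S, (Finset.mem_filter.1 hS).1, (Finset.mem_filter.1 hS).2⟩
    choose! g hg1 hg2 using hch
    have hinj : Set.InjOn g C'' := by
      intro y1 h1 y2 h2 hEq
      by_contra hne12
      obtain ⟨p, hp⟩ := hne (g y1) (hg1 y1 h1)
      have hp2 : p ∈ g y2 := hEq ▸ hp
      have hy1 := Finset.mem_filter.1 (hsub h1)
      have hy2 := Finset.mem_filter.1 (hsub h2)
      exact child_disj hroot hreach hy1.2.1 hy1.2.2.1 hy2.2.1 hy2.2.2.1 hne12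
        (hg2 y1 h1 hp) (hg2 y2 h2 hp2)
    obtain ⟨y0, hy0par, hy0ne, S, hS, S', hS', hSS', ⟨a, haL, haS⟩, ⟨a', haL', haS'⟩⟩ :=
      hnb x' (C''.image g)
        (by intro S hS; obtain ⟨y, hy, rfl⟩ := Finset.mem_image.1 hS; exact hg1 y hy)
        (by rw [Finset.card_image_of_injOn hinj, hcard])
        (by rintro S hS
            obtain ⟨y, hy, rfl⟩ := Finset.mem_image.1 hS
            have hy' := Finset.mem_filter.1 (hsub hy)
            exact (hg2 y hy).trans (leafSet_mono (anc_child hy'.2.1)))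
    obtain ⟨y1, hy1, rfl⟩ := Finset.mem_image.1 hS
    obtain ⟨y2, hy2, rfl⟩ := Finset.mem_image.1 hS'
    have hy1' := Finset.mem_filter.1 (hsub hy1)
    have hy2' := Finset.mem_filter.1 (hsub hy2)
    have e1 : y0 = y1 := by
      by_contra hne01
      exact child_disj hroot hreach hy0par hy0ne hy1'.2.1 hy1'.2.2.1 hne01
        haL (hg2 y1 hy1 haS)
    have e2 : y0 = y2 := by
      by_contra hne02
      exact child_disj hroot hreach hy0par hy0ne hy2'.2.1 hy2'.2.2.1 hne02
        haL' (hg2 y2 hy2 haS')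
    exact hSS' (congrArg g (e1.symm.trans e2))
  -- crossing intervals are few
  have claimX : Χ.card ≤ 2 * c + 2 := by
    by_contra hcon
    push_neg at hcon
    set mn : Set node → node :=
      fun S => if h : S.toFinset.Nonempty then S.toFinset.min' h else root with hmndef
    have hX𝓘 : ∀ S ∈ Χ, S ∈ 𝓘 := fun S hS => (Finset.mem_filter.1 hS).1
    have hmem : ∀ S ∈ Χ, mn S ∈ S ∧ ∀ s ∈ S, mn S ≤ s :=
      fun S hS => mn_spec hne root (hX𝓘 S hS)
    have hmninj : ∀ S ∈ Χ, ∀ S' ∈ Χ, S ≠ S' → mn S ≠ mn S' := by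
      intro S hS S' hS' hSS' hEq
      have hd := hdisj S (hX𝓘 S hS) S' (hX𝓘 S' hS') hSS'
      rw [Set.eq_empty_iff_forall_notMem] at hd
      exact hd (mn S) ⟨(hmem S hS).1, hEq ▸ (hmem S' hS').1⟩
    set Mins : Finset node := Χ.image mn with hMinsdef
    have hMcard : Mins.card = Χ.card :=
      Finset.card_image_of_injOn (fun S hS S' hS' hEq => by
        by_contra hne'
        exact hmninj S hS S' hS' hne' hEq)
    set e := Mins.orderEmbOfFin hMcard with hedef
    have hsel : ∀ i : Fin Χ.card, ∃ S, S ∈ Χ ∧ mn S = e i := by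
      intro i
      obtain ⟨S, hS, hmnS⟩ := Finset.mem_image.1 (Finset.orderEmbOfFin_mem Mins hMcard i)
      exact ⟨S, hS, hmnS⟩
    choose pk hpk1 hpk2 using hsel
    set F : Fin (c + 2) → Set node :=
      fun i => pk ⟨2 * i.val, by have := i.isLt; omega⟩ with hFdef
    have hFval : ∀ i : Fin (c + 2), mn (F i) = e ⟨2 * i.val, by have := i.isLt; omega⟩ :=
      fun i => hpk2 _
    have hFX : ∀ i, F i ∈ Χ := fun i => hpk1 _
    have hFinj : Function.Injective F := by
      intro i j hEq
      by_contra hij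
      have : (⟨2 * i.val, by have := i.isLt; omega⟩ : Fin Χ.card) ≠
          ⟨2 * j.val, by have := j.isLt; omega⟩ := by
        simp only [ne_eq, Fin.mk.injEq]
        intro h; exact hij (Fin.ext (by omega))
      have := (Mins.orderEmbOfFin hMcard).injective.ne this
      rw [← hedef, ← hFval i, ← hFval j, hEq] at this
      exact this rfl
    have main : ∀ i j : Fin (c + 2), i < j → ∀ y0 : node, parent y0 = x' → y0 ≠ x' →
        (leafSet parent y0 ∩ F i).Nonempty → (leafSet parent y0 ∩ F j).Nonempty → False := by
      intro i j hij y0 hy0par hy0ne ⟨a, haL, haS⟩ ⟨c0, hc0L, hc0S⟩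
      have hblt : 2 * i.val + 1 < Χ.card := by have := j.isLt; have := i.isLt; omega
      set mid : Set node := pk ⟨2 * i.val + 1, hblt⟩ with hmid
      have hmidX : mid ∈ Χ := hpk1 _
      have hmid𝓘 : mid ∈ 𝓘 := hX𝓘 _ hmidX
      have estrict := (Mins.orderEmbOfFin hMcard).strictMono
      have hm1 : mn (F i) < mn mid := by
        rw [hFval i, hmid, hpk2]
        exact estrict (by simp [Fin.lt_def])
      have hm2 : mn mid < mn (F j) := by
        rw [hFval j, hmid, hpk2]
        exact estrict (by simp only [Fin.lt_def]; omega)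
      have hFi𝓘 : F i ∈ 𝓘 := hX𝓘 _ (hFX i)
      have hFj𝓘 : F j ∈ 𝓘 := hX𝓘 _ (hFX j)
      have hneFiMid : F i ≠ mid := fun h => absurd (h ▸ hm1) (lt_irrefl _)
      have hneFjMid : F j ≠ mid := fun h => absurd (h ▸ hm2) (lt_irrefl _)
      have hsubmid : mid ⊆ leafSet parent y0 := by
        intro s hs
        have hsleaf : IsTreeLeaf parent s := hleaf mid hmid𝓘 s hs
        have has : a ≤ s := by
          by_contra hcon'
          push_neg at hcon'
          have h1 : mn (F i) ≤ s := le_of_lt (lt_of_lt_of_le hm1 ((hmem mid hmidX).2 s hs))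
          have h2 : s ∈ F i := hint (F i) hFi𝓘 (mn (F i)) (hmem (F i) (hFX i)).1 a haS s
            hsleaf h1 (le_of_lt hcon')
          have hd := hdisj (F i) hFi𝓘 mid hmid𝓘 hneFiMid
          rw [Set.eq_empty_iff_forall_notMem] at hd
          exact hd s ⟨h2, hs⟩
        have hsc : s ≤ c0 := by
          by_contra hcon'
          push_neg at hcon'
          have hmnFjleaf : IsTreeLeaf parent (mn (F j)) :=
            hleaf (F j) hFj𝓘 _ (hmem (F j) (hFX j)).1
          have h2 : mn (F j) ∈ mid := hint mid hmid𝓘 (mn mid) (hmem mid hmidX).1 s hs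
            (mn (F j)) hmnFjleaf (le_of_lt hm2)
            (le_of_lt (lt_of_le_of_lt ((hmem (F j) (hFX j)).2 c0 hc0S) hcon'))
          have hd := hdisj (F j) hFj𝓘 mid hmid𝓘 hneFjMid
          rw [Set.eq_empty_iff_forall_notMem] at hd
          exact hd (mn (F j)) ⟨(hmem (F j) (hFX j)).1, h2⟩
        exact hord y0 a s c0 haL hc0L hsleaf has hsc
      exact (Finset.mem_filter.1 hmidX).2.2 y0 hy0par hy0ne hsubmid
    obtain ⟨y0, hy0par, hy0ne, S, hS, S', hS', hSS', hne1, hne2⟩ :=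
      hnb x' (Finset.univ.image F)
        (by intro S hS; obtain ⟨i, _, rfl⟩ := Finset.mem_image.1 hS; exact hX𝓘 _ (hFX i))
        (by rw [Finset.card_image_of_injective _ hFinj]; simp)
        (by rintro S hS
            obtain ⟨i, _, rfl⟩ := Finset.mem_image.1 hS
            exact (Finset.mem_filter.1 (hFX i)).2.1)
    obtain ⟨i, _, rfl⟩ := Finset.mem_image.1 hS
    obtain ⟨j, _, rfl⟩ := Finset.mem_image.1 hS'
    rcases lt_trichotomy i j with h | h | h
    · exact main i j h y0 hy0par hy0ne hne1 hne2
    · exact hSS' (congrArg F h)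
    · exact main j i h y0 hy0par hy0ne hne2 hne1
  -- partition
  have hpart : 𝓘.filter (fun S => S ⊆ leafSet parent x') ⊆
      Χ ∪ C.biUnion (fun y => 𝓘.filter (fun S => S ⊆ leafSet parent y)) := by
    intro S hS
    have h1 := Finset.mem_filter.1 hS
    by_cases hcase : ∃ y : node, parent y = x' ∧ y ≠ x' ∧ S ⊆ leafSet parent y
    · obtain ⟨y, hp1, hp2, hp3⟩ := hcase
      refine Finset.mem_union_right _ (Finset.mem_biUnion.2 ⟨y, ?_, ?_⟩)
      · exact Finset.mem_filter.2 ⟨Finset.mem_univ y, hp1, hp2,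
          ⟨S, Finset.mem_filter.2 ⟨h1.1, hp3⟩⟩⟩
      · exact Finset.mem_filter.2 ⟨h1.1, hp3⟩
    · push_neg at hcase
      exact Finset.mem_union_left _ (Finset.mem_filter.2 ⟨h1.1, h1.2, hcase⟩)
  have hb1 : (C.biUnion (fun y => 𝓘.filter (fun S => S ⊆ leafSet parent y))).card ≤
      (c + 1) * m := by
    calc (C.biUnion (fun y => 𝓘.filter (fun S => S ⊆ leafSet parent y))).card
        ≤ ∑ y ∈ C, (𝓘.filter (fun S => S ⊆ leafSet parent y)).card :=
          Finset.card_biUnion_le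
      _ ≤ C.card * m := by
          apply Finset.sum_le_card_nsmul
          intro y hy
          have hy' := Finset.mem_filter.1 hy
          exact hchild y hy'.2.1 hy'.2.2.1
      _ ≤ (c + 1) * m := Nat.mul_le_mul_right m claimC
  calc (𝓘.filter (fun S => S ⊆ leafSet parent x')).card
      ≤ (Χ ∪ C.biUnion (fun y => 𝓘.filter (fun S => S ⊆ leafSet parent y))).card :=
        Finset.card_le_card hpart
    _ ≤ Χ.card + (C.biUnion (fun y => 𝓘.filter (fun S => S ⊆ leafSet parent y))).card :=
        Finset.card_union_le _ _
    _ ≤ (2 * c + 2) + (c + 1) * m := Nat.add_le_add claimX hb1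
    _ = (c + 1) * m + (2 * c + 2) := by omega

end Key

section MainLemma

variable {node : Type} [Fintype node] [LinearOrder node]

lemma crossTwo (parent : node → node)
    (hord : ∀ (x a b c : node), a ∈ leafSet parent x → c ∈ leafSet parent x →
      IsTreeLeaf parent b → a ≤ b → b ≤ c → b ∈ leafSet parent x)
    (𝓘 : Finset (Set node))
    (hleaf : ∀ S ∈ 𝓘, ∀ x ∈ S, IsTreeLeaf parent x)
    (hint : ∀ S ∈ 𝓘, ∀ a ∈ S, ∀ c' ∈ S, ∀ x : node,
      IsTreeLeaf parent x → a ≤ x → x ≤ c' → x ∈ S)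
    (hdisj : ∀ S ∈ 𝓘, ∀ S' ∈ 𝓘, S ≠ S' → S ∩ S' = ∅)
    (x' z : node) :
    (𝓘.filter (fun S => S ⊆ leafSet parent z ∧ (S ∩ leafSet parent x').Nonempty ∧
      ¬ S ⊆ leafSet parent x')).card ≤ 2 := by
  classical
  set B := 𝓘.filter (fun S => S ⊆ leafSet parent z ∧ (S ∩ leafSet parent x').Nonempty ∧
      ¬ S ⊆ leafSet parent x') with hBdef
  rcases B.eq_empty_or_nonempty with hB | hB
  · rw [hB]; simp
  obtain ⟨S0, hS0⟩ := hB
  obtain ⟨q, hqS, hqL⟩ := (Finset.mem_filter.1 hS0).2.2.1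
  have hLne : (leafSet parent x').toFinset.Nonempty := ⟨q, Set.mem_toFinset.2 hqL⟩
  set mn' := (leafSet parent x').toFinset.min' hLne with hmn'
  set mx' := (leafSet parent x').toFinset.max' hLne with hmx'
  have hmn'L : mn' ∈ leafSet parent x' := Set.mem_toFinset.1 ((leafSet parent x').toFinset.min'_mem hLne)
  have hmx'L : mx' ∈ leafSet parent x' := Set.mem_toFinset.1 ((leafSet parent x').toFinset.max'_mem hLne)
  have hclaim : ∀ S ∈ B, mn' ∈ S ∨ mx' ∈ S := by
    intro S hS
    have h1 := Finset.mem_filter.1 hS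
    obtain ⟨c0, hc0S, hc0L⟩ := h1.2.2.1
    obtain ⟨a, haS, haL⟩ := Set.not_subset.1 h1.2.2.2
    have haleaf : IsTreeLeaf parent a := hleaf S h1.1 a haS
    have hanec : a ≠ c0 := fun h => haL (h ▸ hc0L)
    rcases lt_or_gt_of_ne hanec with hlt | hgt
    · left
      have h2 : mn' ≤ c0 := (leafSet parent x').toFinset.min'_le c0 (Set.mem_toFinset.2 hc0L)
      have h3 : a ≤ mn' := by
        by_contra hcon
        push_neg at hcon
        exact haL (hord x' mn' a c0 hmn'L hc0L haleaf (le_of_lt hcon) (le_of_lt hlt))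
      exact hint S h1.1 a haS c0 hc0S mn' hmn'L.1 h3 h2
    · right
      have h2 : c0 ≤ mx' := (leafSet parent x').toFinset.le_max' c0 (Set.mem_toFinset.2 hc0L)
      have h3 : mx' ≤ a := by
        by_contra hcon
        push_neg at hcon
        exact haL (hord x' c0 a mx' hc0L hmx'L haleaf (le_of_lt hgt) (le_of_lt hcon))
      exact hint S h1.1 c0 hc0S a haS mx' hmx'L.1 h2 h3
  have hsub : B ⊆ 𝓘.filter (fun S => mn' ∈ S) ∪ 𝓘.filter (fun S => mx' ∈ S) := by
    intro S hS
    rcases hclaim S hS with h | h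
    · exact Finset.mem_union_left _ (Finset.mem_filter.2 ⟨(Finset.mem_filter.1 hS).1, h⟩)
    · exact Finset.mem_union_right _ (Finset.mem_filter.2 ⟨(Finset.mem_filter.1 hS).1, h⟩)
  have hone : ∀ p : node, (𝓘.filter (fun S => p ∈ S)).card ≤ 1 := by
    intro p
    apply Finset.card_le_one.2
    intro S hS S' hS'
    have h1 := Finset.mem_filter.1 hS
    have h2 := Finset.mem_filter.1 hS'
    by_contra hne'
    have hd := hdisj S h1.1 S' h2.1 hne'
    rw [Set.eq_empty_iff_forall_notMem] at hd
    exact hd p ⟨h1.2, h2.2⟩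
  calc B.card ≤ (𝓘.filter (fun S => mn' ∈ S) ∪ 𝓘.filter (fun S => mx' ∈ S)).card :=
        Finset.card_le_card hsub
    _ ≤ (𝓘.filter (fun S => mn' ∈ S)).card + (𝓘.filter (fun S => mx' ∈ S)).card :=
        Finset.card_union_le _ _
    _ ≤ 2 := by have := hone mn'; have := hone mx'; omega

def gBound (c t : ℕ) : ℕ := if t = 0 then 1 else 2 * (c + 4) ^ t

lemma Emain (root : node) (parent : node → node)
    (hroot : parent root = root)
    (hreach : ∀ x : node, ∃ k : ℕ, parent^[k] x = root)
    (hord : ∀ (x a b c : node), a ∈ leafSet parent x → c ∈ leafSet parent x →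
      IsTreeLeaf parent b → a ≤ b → b ≤ c → b ∈ leafSet parent x)
    (c : ℕ) (𝓘 : Finset (Set node))
    (hleaf : ∀ S ∈ 𝓘, ∀ x ∈ S, IsTreeLeaf parent x)
    (hint : ∀ S ∈ 𝓘, ∀ a ∈ S, ∀ c' ∈ S, ∀ x : node,
      IsTreeLeaf parent x → a ≤ x → x ≤ c' → x ∈ S)
    (hdisj : ∀ S ∈ 𝓘, ∀ S' ∈ 𝓘, S ≠ S' → S ∩ S' = ∅)
    (hne : ∀ S ∈ 𝓘, S.Nonempty)
    (hnb : ∀ (x : node) (𝓘' : Finset (Set node)), 𝓘' ⊆ 𝓘 → c + 2 ≤ 𝓘'.card →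
      (∀ S ∈ 𝓘', S ⊆ leafSet parent x) →
      ∃ y, parent y = x ∧ y ≠ x ∧ ∃ S ∈ 𝓘', ∃ S' ∈ 𝓘', S ≠ S' ∧
        (leafSet parent y ∩ S).Nonempty ∧ (leafSet parent y ∩ S').Nonempty) :
    ∀ t : ℕ, ∀ z : node,
      gBound c t ≤ (𝓘.filter (fun S => S ⊆ leafSet parent z)).card →
      ∃ (J : Fin t → Set node) (x : Fin t → node) (I₀ : Set node),
        (∀ j, J j ∈ 𝓘) ∧
        (∀ j, J j ⊆ leafSet parent z) ∧
        (∀ j j' : Fin t, j ≤ j' → J j' ⊆ leafSet parent (x j)) ∧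
        (∀ j j' : Fin t, (j' : ℕ) + 1 = (j : ℕ) → leafSet parent (x j) ∩ J j' = ∅) ∧
        I₀ ∈ 𝓘 ∧ I₀ ⊆ leafSet parent z ∧
        ∀ (h : 0 < t), I₀ ∩ leafSet parent (x ⟨0, h⟩) = ∅ := by
  classical
  intro t
  induction t with
  | zero =>
    intro z hz
    rw [gBound, if_pos rfl] at hz
    have hpos : 0 < (𝓘.filter (fun S => S ⊆ leafSet parent z)).card := by omega
    obtain ⟨I₀, hI₀⟩ := Finset.card_pos.1 hpos
    have hI := Finset.mem_filter.1 hI₀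
    exact ⟨Fin.elim0, Fin.elim0, I₀, fun j => j.elim0, fun j => j.elim0, fun j => j.elim0,
      fun j => j.elim0, hI.1, hI.2, fun h => absurd h (lt_irrefl 0)⟩
  | succ t ih =>
    intro z hz
    rw [gBound, if_neg (Nat.succ_ne_zero t)] at hz
    have hM1 : 1 ≤ gBound c t := by
      rw [gBound]; split
      · exact le_rfl
      · have := pow_pos (show 0 < c + 4 by omega) t
        omega
    have hMle : gBound c t ≤ 2 * (c + 4) ^ (t + 1) := by
      rw [gBound]; split
      · have := pow_pos (show 0 < c + 4 by omega) (t + 1)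
        omega
      · have h1 : (c + 4) ^ t ≤ (c + 4) ^ (t + 1) := Nat.pow_le_pow_right (by omega) (by omega)
        omega
    -- minimal descendant with many intervals
    set D := Finset.univ.filter (fun x : node => TreeAnc parent z x ∧
      gBound c t ≤ (𝓘.filter (fun S => S ⊆ leafSet parent x)).card) with hDdef
    have hzD : z ∈ D := Finset.mem_filter.2 ⟨Finset.mem_univ _, anc_refl _ _, le_trans hMle hz⟩
    obtain ⟨x', hx'D, hx'min⟩ := Finset.exists_min_image D
      (fun x => (Finset.univ.filter (fun w => TreeAnc parent x w)).card) ⟨z, hzD⟩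
    have hx'D' := Finset.mem_filter.1 hx'D
    have hanczx' : TreeAnc parent z x' := hx'D'.2.1
    have hnx' : gBound c t ≤ (𝓘.filter (fun S => S ⊆ leafSet parent x')).card := hx'D'.2.2
    have hchild : ∀ y : node, parent y = x' → y ≠ x' →
        (𝓘.filter (fun S => S ⊆ leafSet parent y)).card ≤ gBound c t - 1 := by
      intro y hy hyx
      by_contra hcon
      push_neg at hcon
      have hyD : y ∈ D := Finset.mem_filter.2 ⟨Finset.mem_univ _,
        anc_trans hanczx' (anc_child hy), by omega⟩
      have hss : Finset.univ.filter (fun w => TreeAnc parent y w) ⊂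
          Finset.univ.filter (fun w => TreeAnc parent x' w) := by
        constructor
        · intro w hw
          exact Finset.mem_filter.2 ⟨Finset.mem_univ _,
            anc_trans (anc_child hy) (Finset.mem_filter.1 hw).2⟩
        · intro hsub
          have hx'mem : x' ∈ Finset.univ.filter (fun w => TreeAnc parent x' w) :=
            Finset.mem_filter.2 ⟨Finset.mem_univ _, anc_refl _ _⟩
          exact child_not_anc hroot hreach hy hyx (Finset.mem_filter.1 (hsub hx'mem)).2
      have h1 := Finset.card_lt_card hss
      have h2 := hx'min y hyD
      omega
    have hkey := keyBound root parent hroot hreach hord c 𝓘 hleaf hint hdisj hne hnb x'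
      (gBound c t - 1) hchild
    have hcross := crossTwo parent hord 𝓘 hleaf hint hdisj x' z
    -- find an interval of z avoiding x'
    have hex : ∃ I₀, I₀ ∈ 𝓘 ∧ I₀ ⊆ leafSet parent z ∧ I₀ ∩ leafSet parent x' = ∅ := by
      by_contra hcon
      push_neg at hcon
      have hsub : 𝓘.filter (fun S => S ⊆ leafSet parent z) ⊆
          (𝓘.filter (fun S => S ⊆ leafSet parent x')) ∪
          (𝓘.filter (fun S => S ⊆ leafSet parent z ∧ (S ∩ leafSet parent x').Nonempty ∧
            ¬ S ⊆ leafSet parent x')) := by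
        intro S hS
        have h1 := Finset.mem_filter.1 hS
        by_cases h2 : S ⊆ leafSet parent x'
        · exact Finset.mem_union_left _ (Finset.mem_filter.2 ⟨h1.1, h2⟩)
        · exact Finset.mem_union_right _ (Finset.mem_filter.2 ⟨h1.1, h1.2, hcon S h1.1 h1.2, h2⟩)
      have hc1 := Finset.card_le_card hsub
      have hc2 := Finset.card_union_le (𝓘.filter (fun S => S ⊆ leafSet parent x'))
        (𝓘.filter (fun S => S ⊆ leafSet parent z ∧ (S ∩ leafSet parent x').Nonempty ∧
            ¬ S ⊆ leafSet parent x'))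
      have harith : (c + 1) * (gBound c t - 1) + (2 * c + 2) + 2 < 2 * (c + 4) ^ (t + 1) := by
        rcases Nat.eq_zero_or_pos t with ht0 | htpos
        · subst ht0
          have hg : gBound c 0 = 1 := rfl
          rw [hg]
          simp only [Nat.sub_self, Nat.mul_zero]
          have hp : (c + 4) ^ (0 + 1) = c + 4 := pow_one _
          rw [hp]
          omega
        · have hgval : gBound c t = 2 * (c + 4) ^ t := by rw [gBound, if_neg (by omega)]
          have hXge : 2 * (c + 4) ≤ 2 * (c + 4) ^ t := by
            have h1 : (c + 4) ^ 1 ≤ (c + 4) ^ t := Nat.pow_le_pow_right (by omega) htpos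
            simp only [pow_one] at h1
            omega
          have hpow : 2 * (c + 4) ^ (t + 1) = (c + 4) * (2 * (c + 4) ^ t) := by ring
          rw [hpow, hgval]
          set X := 2 * (c + 4) ^ t with hX
          obtain ⟨Y, hY⟩ : ∃ Y, X = Y + 1 := ⟨X - 1, by omega⟩
          rw [hY]
          simp only [Nat.add_sub_cancel]
          have hYge : 2 * c + 7 ≤ Y := by omega
          nlinarith
      omega
    obtain ⟨I₀, hI₀𝓘, hI₀z, hI₀x'⟩ := hex
    obtain ⟨J, xs, I₁, hJ𝓘, hJsub, hJmon, hJdisj, hI₁𝓘, hI₁sub, hI₁dis⟩ := ih x' hnx'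
    have hsub' : leafSet parent x' ⊆ leafSet parent z := leafSet_mono hanczx'
    refine ⟨Fin.cons I₁ J, Fin.cons x' xs, I₀, ?_, ?_, ?_, ?_, hI₀𝓘, hI₀z, ?_⟩
    · intro j
      rcases Fin.eq_zero_or_eq_succ j with rfl | ⟨i, rfl⟩
      · simpa using hI₁𝓘
      · simpa using hJ𝓘 i
    · intro j
      rcases Fin.eq_zero_or_eq_succ j with rfl | ⟨i, rfl⟩
      · simpa using hI₁sub.trans hsub'
      · simpa using (hJsub i).trans hsub'
    · intro j j' hjj'
      rcases Fin.eq_zero_or_eq_succ j with rfl | ⟨i, rfl⟩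
      · rcases Fin.eq_zero_or_eq_succ j' with rfl | ⟨i', rfl⟩
        · simpa using hI₁sub
        · simp only [Fin.cons_zero, Fin.cons_succ]
          exact hJsub i'
      · rcases Fin.eq_zero_or_eq_succ j' with rfl | ⟨i', rfl⟩
        · exact absurd hjj' (by simp [Fin.le_def])
        · simp only [Fin.cons_succ]
          exact hJmon i i' (by rwa [Fin.succ_le_succ_iff] at hjj')
    · intro j j' hjj'
      rcases Fin.eq_zero_or_eq_succ j with rfl | ⟨i, rfl⟩
      · simp at hjj'
      · rcases Fin.eq_zero_or_eq_succ j' with rfl | ⟨i', rfl⟩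
        · have hi0 : (i : ℕ) = 0 := by
            simp only [Fin.val_zero, Fin.val_succ] at hjj'
            omega
          simp only [Fin.cons_succ, Fin.cons_zero]
          have hieq : i = ⟨0, i.pos⟩ := Fin.ext hi0
          rw [hieq, Set.inter_comm]
          exact hI₁dis i.pos
        · simp only [Fin.cons_succ]
          exact hJdisj i i' (by simp only [Fin.val_succ] at hjj'; omega)
    · intro h
      have h0 : (⟨0, h⟩ : Fin (t + 1)) = 0 := rfl
      rw [h0, Fin.cons_zero]
      exact hI₀x'

end MainLemma

/-- **K\H{o}nig-type lemma for ordered trees.**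
Let `(T, <)` be an ordered rooted tree (the set of leaf descendants of every
node is an interval of the order on the leaves), and let `𝓘` be a family of
pairwise disjoint intervals of leaves with `|𝓘| ≥ 2(b+2)^t`.  Then either some
node is `b`-branching, or there is a `t`-interval path. -/
theorem stmt4 {node : Type} [Fintype node] [LinearOrder node]
    (root : node) (parent : node → node)
    (hroot : parent root = root)
    (hreach : ∀ x : node, ∃ k : ℕ, parent^[k] x = root)
    (hord : ∀ (x a b c : node), a ∈ leafSet parent x → c ∈ leafSet parent x →
      IsTreeLeaf parent b → a ≤ b → b ≤ c → b ∈ leafSet parent x)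
    (b t : ℕ) (𝓘 : Finset (Set node))
    (hleaf : ∀ S ∈ 𝓘, ∀ x ∈ S, IsTreeLeaf parent x)
    (hint : ∀ S ∈ 𝓘, ∀ a ∈ S, ∀ c ∈ S, ∀ x : node,
      IsTreeLeaf parent x → a ≤ x → x ≤ c → x ∈ S)
    (hdisj : ∀ S ∈ 𝓘, ∀ S' ∈ 𝓘, S ≠ S' → S ∩ S' = ∅)
    (hcard : 2 * (b + 2) ^ t ≤ 𝓘.card) :
    (∃ x : node, ∃ 𝓘' ⊆ 𝓘, b ≤ 𝓘'.card ∧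
        (∀ S ∈ 𝓘', S ⊆ leafSet parent x) ∧
        ∀ y : node, parent y = x → y ≠ x →
          ¬ ∃ S ∈ 𝓘', ∃ S' ∈ 𝓘', S ≠ S' ∧
            (leafSet parent y ∩ S).Nonempty ∧ (leafSet parent y ∩ S').Nonempty)
    ∨ (∃ (J : Fin t → Set node) (x : Fin t → node),
        (∀ j : Fin t, J j ∈ 𝓘) ∧
        (∀ j j' : Fin t, j ≤ j' → J j' ⊆ leafSet parent (x j)) ∧
        ∀ j j' : Fin t, (j' : ℕ) + 1 = (j : ℕ) →
          leafSet parent (x j) ∩ J j' = ∅) := by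
  classical
  by_cases hemp : (∅ : Set node) ∈ 𝓘
  · right
    exact ⟨fun _ => ∅, fun _ => root, fun _ => hemp,
      fun j j' _ => Set.empty_subset _, fun j j' _ => Set.inter_empty _⟩
  have hne : ∀ S ∈ 𝓘, S.Nonempty := fun S hS =>
    Set.nonempty_iff_ne_empty.2 (fun h => hemp (h ▸ hS))
  have hIpos : 0 < 𝓘.card := by
    have : 0 < 2 * (b + 2) ^ t := by
      have := pow_pos (show 0 < b + 2 by omega) t
      omega
    omega
  by_cases hb : b ≤ 1
  · left
    obtain ⟨S₀, hS₀⟩ := Finset.card_pos.1 hIpos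
    refine ⟨root, {S₀}, Finset.singleton_subset_iff.2 hS₀, by simp; omega, ?_, ?_⟩
    · intro S hS
      rw [Finset.mem_singleton] at hS
      subst hS
      exact fun l hl => ⟨hleaf S hS₀ l hl, hreach l⟩
    · rintro y hy hyne ⟨S, hS, S', hS', hSS', _⟩
      rw [Finset.mem_singleton] at hS hS'
      exact hSS' (hS.trans hS'.symm)
  push_neg at hb
  by_cases hbr : (∃ x : node, ∃ 𝓘' ⊆ 𝓘, b ≤ 𝓘'.card ∧
        (∀ S ∈ 𝓘', S ⊆ leafSet parent x) ∧
        ∀ y : node, parent y = x → y ≠ x →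
          ¬ ∃ S ∈ 𝓘', ∃ S' ∈ 𝓘', S ≠ S' ∧
            (leafSet parent y ∩ S).Nonempty ∧ (leafSet parent y ∩ S').Nonempty)
  · exact Or.inl hbr
  right
  push_neg at hbr
  obtain ⟨c, rfl⟩ : ∃ c, b = c + 2 := ⟨b - 2, by omega⟩
  have hnb : ∀ (x : node) (𝓘' : Finset (Set node)), 𝓘' ⊆ 𝓘 → c + 2 ≤ 𝓘'.card →
      (∀ S ∈ 𝓘', S ⊆ leafSet parent x) →
      ∃ y, parent y = x ∧ y ≠ x ∧ ∃ S ∈ 𝓘', ∃ S' ∈ 𝓘', S ≠ S' ∧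
        (leafSet parent y ∩ S).Nonempty ∧ (leafSet parent y ∩ S').Nonempty := by
    intro x 𝓘' h1 h2 h3
    obtain ⟨y, hy1, hy2, hy3⟩ := hbr x 𝓘' h1 h2 h3
    exact ⟨y, hy1, hy2, hy3⟩
  rcases Nat.eq_zero_or_pos t with rfl | htpos
  · exact ⟨Fin.elim0, Fin.elim0, fun j => j.elim0, fun j => j.elim0, fun j => j.elim0⟩
  have hfull : 𝓘.filter (fun S => S ⊆ leafSet parent root) = 𝓘 :=
    Finset.filter_true_of_mem (fun S hS l hl => ⟨hleaf S hS l hl, hreach l⟩)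
  have hg : gBound c t ≤ (𝓘.filter (fun S => S ⊆ leafSet parent root)).card := by
    rw [hfull, gBound, if_neg (by omega)]
    exact hcard
  obtain ⟨J, x, I₀, h1, h2, h3, h4, _, _, _⟩ :=
    Emain root parent hroot hreach hord c 𝓘 hleaf hint hdisj hne hnb t root hg
  exact ⟨J, x, h1, h3, h4⟩
end

section
/- Let q ≥ 2 and suppose the edges of the ordered complete graph K_q are 2-colored with no monochromatic clique of size s. Form the ordered complete graph K_{q^i} by i−1 successive lexicographic substitutions of this colored K_q into itself. If f(i) denotes the maximum size of a monochromatic complete interval minor of K_{q^i} under the resulting coloring, then f(i) ≤ s · f(i−1) + q for all i ≥ 2, and consequently f(i) ≤ q · s^i. -/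
/-- The coloring of the edges of the ordered complete graph on `Fin (q^i)`
obtained from a base coloring `c` of `K_q` by `i−1` successive lexicographic
substitutions: writing vertices in base `q`, the color of the edge `{u, v}` is
the base color of the pair of most significant digits where `u` and `v`
differ. -/
def lexColor (q : ℕ) (c : ℕ → ℕ → Bool) (i : ℕ) (u v : ℕ) : Bool :=
  let D := Nat.findGreatest (fun j => u / q ^ j % q ≠ v / q ^ j % q) i
  c (u / q ^ D % q) (v / q ^ D % q)

/-- The coloring `lexColor q c i` of the ordered complete graph on `Fin (q^i)`
admits a monochromatic complete interval minor of size `t`: a color and a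
partition of `Fin (q^i)` into `t` nonempty intervals with an edge of that
color between any two distinct intervals. -/
def HasMonoCIM (q : ℕ) (c : ℕ → ℕ → Bool) (i t : ℕ) : Prop :=
  ∃ (col : Bool) (f : Fin (q ^ i) → Fin t), Monotone f ∧ Function.Surjective f ∧
    ∀ a b : Fin t, a ≠ b → ∃ u v : Fin (q ^ i),
      f u = a ∧ f v = b ∧ lexColor q c i (u : ℕ) (v : ℕ) = col

lemma digit_shift (q J m x : ℕ) (hq : 1 ≤ q) (hx : x < q ^ J) (j : ℕ) (hj : j < J) :
    (m * q ^ J + x) / q ^ j % q = x / q ^ j % q := by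
  have h1 : q ^ J = q ^ (J - j) * q ^ j := by
    rw [← pow_add]; congr 1; omega
  have hqj : 0 < q ^ j := Nat.pow_pos hq
  have h2 : (m * q ^ J + x) / q ^ j = m * q ^ (J - j) + x / q ^ j := by
    rw [h1, ← mul_assoc, Nat.add_comm, Nat.add_mul_div_right _ _ hqj, Nat.add_comm]
  rw [h2]
  have h3 : q ^ (J - j) = q ^ (J - j - 1) * q := by
    rw [← pow_succ]; congr 1; omega
  rw [h3, ← mul_assoc, Nat.add_comm, Nat.add_mul_mod_self_right]

lemma digit_top (q J m x : ℕ) (hm : m < q) (hx : x < q ^ J) :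
    (m * q ^ J + x) / q ^ J % q = m := by
  have hqj : 0 < q ^ J := Nat.pow_pos (by omega)
  rw [Nat.add_comm, Nat.add_mul_div_right _ _ hqj, Nat.div_eq_of_lt hx, Nat.zero_add,
    Nat.mod_eq_of_lt hm]

lemma digit_high (q J u : ℕ) (hq : 1 ≤ q) (hu : u < q ^ J) (j : ℕ) (hj : J ≤ j) :
    u / q ^ j = 0 :=
  Nat.div_eq_of_lt (lt_of_lt_of_le hu (Nat.pow_le_pow_right hq hj))

lemma findGreatest_congr (P Q : ℕ → Prop) [DecidablePred P] [DecidablePred Q]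
    (h : ∀ n, P n ↔ Q n) (n : ℕ) : Nat.findGreatest P n = Nat.findGreatest Q n := by
  induction n with
  | zero => rfl
  | succ k ih =>
      rw [Nat.findGreatest_succ, Nat.findGreatest_succ]
      exact if_congr (h _) rfl ih

lemma exists_digit_ne (q : ℕ) (hq : 2 ≤ q) : ∀ (J x y : ℕ), x < q ^ J → y < q ^ J →
    x ≠ y → ∃ j < J, x / q ^ j % q ≠ y / q ^ j % q := by
  intro J
  induction J with
  | zero => intro x y hx hy hxy; simp at hx hy; omega
  | succ K ih =>
      intro x y hx hy hxy
      by_cases h0 : x % q = y % q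
      · have hxq : x / q < q ^ K := by
          rw [Nat.div_lt_iff_lt_mul (by omega)]
          calc x < q ^ (K + 1) := hx
            _ = q ^ K * q := pow_succ q K
        have hyq : y / q < q ^ K := by
          rw [Nat.div_lt_iff_lt_mul (by omega)]
          calc y < q ^ (K + 1) := hy
            _ = q ^ K * q := pow_succ q K
        have hne : x / q ≠ y / q := by
          intro h; apply hxy
          have h1 := Nat.div_add_mod x q
          have h2 := Nat.div_add_mod y q
          rw [h] at h1
          omega
        obtain ⟨j, hj, hd⟩ := ih (x / q) (y / q) hxq hyq hne
        have e : ∀ z : ℕ, z / q ^ (j + 1) = z / q / q ^ j := fun z => by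
          rw [pow_succ', Nat.div_div_eq_div_mul]
        exact ⟨j + 1, by omega, by rw [e, e]; exact hd⟩
      · exact ⟨0, by omega, by simpa using h0⟩

lemma lexColor_cross (q : ℕ) (hq : 2 ≤ q) (c : ℕ → ℕ → Bool) (J m m' x y : ℕ)
    (hm : m < q) (hm' : m' < q) (hne : m ≠ m') (hx : x < q ^ J) (hy : y < q ^ J) :
    lexColor q c (J + 1) (m * q ^ J + x) (m' * q ^ J + y) = c m m' := by
  set u := m * q ^ J + x with hu
  set v := m' * q ^ J + y with hv
  have hdu : u / q ^ J % q = m := digit_top q J m x hm hx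
  have hdv : v / q ^ J % q = m' := digit_top q J m' y hm' hy
  have huQ : u < q ^ (J + 1) := by
    have : q ^ (J + 1) = q * q ^ J := pow_succ' q J
    calc u < m * q ^ J + q ^ J := by omega
      _ = (m + 1) * q ^ J := by ring
      _ ≤ q * q ^ J := Nat.mul_le_mul_right _ (by omega)
      _ = q ^ (J + 1) := this.symm
  have hvQ : v < q ^ (J + 1) := by
    have : q ^ (J + 1) = q * q ^ J := pow_succ' q J
    calc v < m' * q ^ J + q ^ J := by omega
      _ = (m' + 1) * q ^ J := by ring
      _ ≤ q * q ^ J := Nat.mul_le_mul_right _ (by omega)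
      _ = q ^ (J + 1) := this.symm
  set P := fun j => u / q ^ j % q ≠ v / q ^ j % q with hP
  have hPJ : P J := by simp only [hP]; rw [hdu, hdv]; exact hne
  have hPJ1 : ¬ P (J + 1) := by
    simp only [hP]
    rw [digit_high q (J+1) u (by omega) huQ (J+1) le_rfl,
      digit_high q (J+1) v (by omega) hvQ (J+1) le_rfl]
    simp
  have hD : Nat.findGreatest P (J + 1) = J := by
    have h1 : Nat.findGreatest P (J + 1) = Nat.findGreatest P J := by
      rw [Nat.findGreatest_succ, if_neg hPJ1]
    rw [h1]
    exact le_antisymm (Nat.findGreatest_le J) (Nat.le_findGreatest le_rfl hPJ)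
  show c (u / q ^ (Nat.findGreatest P (J+1)) % q) (v / q ^ (Nat.findGreatest P (J+1)) % q) = c m m'
  rw [hD, hdu, hdv]

lemma lexColor_inside (q : ℕ) (hq : 2 ≤ q) (c : ℕ → ℕ → Bool) (J m x y : ℕ)
    (hJ : 1 ≤ J) (hm : m < q) (hx : x < q ^ J) (hy : y < q ^ J) (hxy : x ≠ y) :
    lexColor q c (J + 1) (m * q ^ J + x) (m * q ^ J + y) = lexColor q c J x y := by
  set u := m * q ^ J + x with hu
  set v := m * q ^ J + y with hv
  have huQ : u < q ^ (J + 1) := by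
    have : q ^ (J + 1) = q * q ^ J := pow_succ' q J
    calc u < m * q ^ J + q ^ J := by omega
      _ = (m + 1) * q ^ J := by ring
      _ ≤ q * q ^ J := Nat.mul_le_mul_right _ (by omega)
      _ = q ^ (J + 1) := this.symm
  have hvQ : v < q ^ (J + 1) := by
    have : q ^ (J + 1) = q * q ^ J := pow_succ' q J
    calc v < m * q ^ J + q ^ J := by omega
      _ = (m + 1) * q ^ J := by ring
      _ ≤ q * q ^ J := Nat.mul_le_mul_right _ (by omega)
      _ = q ^ (J + 1) := this.symm
  set P := fun j => u / q ^ j % q ≠ v / q ^ j % q with hPdef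
  set P' := fun j => x / q ^ j % q ≠ y / q ^ j % q with hP'def
  have hiff : ∀ j, P j ↔ P' j := by
    intro j
    rcases lt_trichotomy j J with h | h | h
    · simp only [hPdef, hP'def, hu, hv]
      rw [digit_shift q J m x (by omega) hx j h, digit_shift q J m y (by omega) hy j h]
    · subst h
      simp only [hPdef, hP'def]
      rw [digit_top q j m x hm hx, digit_top q j m y hm hy,
        digit_high q j x (by omega) hx j le_rfl, digit_high q j y (by omega) hy j le_rfl]
      simp
    · simp only [hPdef, hP'def]
      rw [digit_high q (J+1) u (by omega) huQ j (by omega),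
        digit_high q (J+1) v (by omega) hvQ j (by omega),
        digit_high q J x (by omega) hx j (by omega),
        digit_high q J y (by omega) hy j (by omega)]
  have hcongr : Nat.findGreatest P (J + 1) = Nat.findGreatest P' (J + 1) :=
    findGreatest_congr P P' hiff (J + 1)
  have hP'J1 : ¬ P' (J + 1) := by
    simp only [hP'def]
    rw [digit_high q J x (by omega) hx (J+1) (by omega),
      digit_high q J y (by omega) hy (J+1) (by omega)]
    simp
  have hP'J : ¬ P' J := by
    simp only [hP'def]
    rw [digit_high q J x (by omega) hx J le_rfl, digit_high q J y (by omega) hy J le_rfl]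
    simp
  have hstep : Nat.findGreatest P' (J + 1) = Nat.findGreatest P' J := by
    rw [Nat.findGreatest_succ, if_neg hP'J1]
  obtain ⟨j0, hj0J, hj0⟩ := exists_digit_ne q hq J x y hx hy hxy
  have hspec : P' (Nat.findGreatest P' J) :=
    Nat.findGreatest_spec (m := j0) (by omega) hj0
  have hDlt : Nat.findGreatest P' J < J := by
    have h1 := Nat.findGreatest_le (P := P') J
    rcases Nat.eq_or_lt_of_le h1 with h | h
    · exact absurd (h ▸ hspec) hP'J
    · exact h
  show c (u / q ^ (Nat.findGreatest P (J+1)) % q) (v / q ^ (Nat.findGreatest P (J+1)) % q) =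
    c (x / q ^ (Nat.findGreatest P' J) % q) (y / q ^ (Nat.findGreatest P' J) % q)
  rw [hcongr, hstep, digit_shift q J m x (by omega) hx _ hDlt,
    digit_shift q J m y (by omega) hy _ hDlt]

lemma step (q s : ℕ) (hq : 2 ≤ q) (c : ℕ → ℕ → Bool)
    (hnoclique : ∀ (col : Bool) (S : Finset ℕ), (∀ x ∈ S, x < q) →
      s ≤ S.card → ∃ a ∈ S, ∃ b ∈ S, a ≠ b ∧ c a b ≠ col)
    (J t : ℕ) (hJ : 1 ≤ J) (h : HasMonoCIM q c (J + 1) t) :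
    ∃ t' : ℕ, HasMonoCIM q c J t' ∧ t ≤ s * t' + q := by
  obtain ⟨col, f, hmono, hsurj, hedge⟩ := h
  have hQpos : 0 < q ^ J := Nat.pow_pos (by omega)
  have hN : q ^ (J + 1) = q * q ^ J := pow_succ' q J
  set F : Fin t → Finset (Fin (q ^ (J + 1))) :=
    fun a => Finset.univ.filter (fun u => f u = a) with hFdef
  have hmemF : ∀ (a : Fin t) (u : Fin (q ^ (J + 1))), u ∈ F a ↔ f u = a := by
    intro a u; simp [hFdef]
  have hFne : ∀ a : Fin t, (F a).Nonempty := by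
    intro a; obtain ⟨u, hu⟩ := hsurj a; exact ⟨u, (hmemF a u).2 hu⟩
  set lo : Fin t → ℕ := fun a => (((F a).min' (hFne a) : Fin (q ^ (J + 1))) : ℕ) with hlodef
  set hi : Fin t → ℕ := fun a => (((F a).max' (hFne a) : Fin (q ^ (J + 1))) : ℕ) with hhidef
  have hlo_mem : ∀ a, (F a).min' (hFne a) ∈ F a := fun a => Finset.min'_mem _ _
  have hlohi : ∀ a, ∀ u ∈ F a, lo a ≤ (u : ℕ) ∧ (u : ℕ) ≤ hi a := by
    intro a u hu
    exact ⟨Finset.min'_le _ _ hu, Finset.le_max' _ _ hu⟩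
  have hsep : ∀ (a b : Fin t), a < b → ∀ u ∈ F a, ∀ v ∈ F b, (u : ℕ) < (v : ℕ) := by
    intro a b hab u hu v hv
    rw [hmemF] at hu hv
    by_contra hcon
    have hvu : v ≤ u := by
      rw [Fin.le_def]; omega
    have := hmono hvu
    rw [hu, hv] at this
    exact absurd (lt_of_lt_of_le hab this) (lt_irrefl _)
  have hhilo : ∀ (a b : Fin t), a < b → hi a < lo b := by
    intro a b hab
    exact hsep a b hab _ (Finset.max'_mem _ _) _ (Finset.min'_mem _ _)
  set bl : Fin t → ℕ := fun a => lo a / q ^ J with hbldef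
  set br : Fin t → ℕ := fun a => hi a / q ^ J with hbrdef
  have hlt : ∀ a, lo a < q ^ (J + 1) := fun a => ((F a).min' (hFne a)).isLt
  have hht : ∀ a, hi a < q ^ (J + 1) := fun a => ((F a).max' (hFne a)).isLt
  have hblq : ∀ a, bl a < q := by
    intro a
    show lo a / q ^ J < q
    rw [Nat.div_lt_iff_lt_mul hQpos]
    have h9 := hlt a
    rw [hN] at h9
    exact h9
  have hbrq : ∀ a, br a < q := by
    intro a
    show hi a / q ^ J < q
    rw [Nat.div_lt_iff_lt_mul hQpos]
    have h9 := hht a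
    rw [hN] at h9
    exact h9
  have hblbr : ∀ a, bl a ≤ br a := by
    intro a
    exact Nat.div_le_div_right (hlohi a _ (Finset.min'_mem _ _)).2
  have hins : ∀ a, bl a = br a → ∀ u ∈ F a, (u : ℕ) / q ^ J = bl a := by
    intro a hab u hu
    obtain ⟨h1, h2⟩ := hlohi a u hu
    have l1 : bl a ≤ (u : ℕ) / q ^ J := Nat.div_le_div_right h1
    have l2 : (u : ℕ) / q ^ J ≤ br a := Nat.div_le_div_right h2
    omega
  -- decomposition of a vertex
  have hdec : ∀ u : Fin (q ^ (J + 1)), (u : ℕ) = ((u : ℕ) / q ^ J) * q ^ J + (u : ℕ) % q ^ J := by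
    intro u; rw [Nat.mul_comm ((u : ℕ) / q ^ J) (q ^ J)]; exact (Nat.div_add_mod _ _).symm
  have hmodlt : ∀ u : Fin (q ^ (J + 1)), (u : ℕ) % q ^ J < q ^ J :=
    fun u => Nat.mod_lt _ hQpos
  -- the set of blocks containing an inside interval
  set S : Finset ℕ :=
    (Finset.univ.filter (fun a : Fin t => bl a = br a)).image bl with hSdef
  have hSlt : ∀ x ∈ S, x < q := by
    intro x hx
    rw [hSdef, Finset.mem_image] at hx
    obtain ⟨a, _, rfl⟩ := hx
    exact hblq a
  have hSclique : ∀ m ∈ S, ∀ m' ∈ S, m ≠ m' → c m m' = col := by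
    intro m hm m' hm'
    rw [hSdef, Finset.mem_image] at hm hm'
    obtain ⟨a, ha, rfl⟩ := hm
    obtain ⟨b, hb, rfl⟩ := hm'
    rw [Finset.mem_filter] at ha hb
    intro hne
    have hab : a ≠ b := fun e => hne (e ▸ rfl)
    obtain ⟨u, v, hu, hv, hcuv⟩ := hedge a b hab
    have hu' : (u : ℕ) / q ^ J = bl a := hins a ha.2 u ((hmemF a u).2 hu)
    have hv' : (v : ℕ) / q ^ J = bl b := hins b hb.2 v ((hmemF b v).2 hv)
    have := lexColor_cross q hq c J (bl a) (bl b) ((u : ℕ) % q ^ J) ((v : ℕ) % q ^ J)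
      (hblq a) (hblq b) hne (hmodlt u) (hmodlt v)
    rw [← hu', ← hv'] at this
    rw [← hdec u, ← hdec v] at this
    rw [hcuv] at this
    rw [← hu', ← hv']
    exact this.symm
  have hScard : S.card < s := by
    by_contra hcon
    obtain ⟨m, hm, m', hm', hne, hcne⟩ := hnoclique col S hSlt (by omega)
    exact hcne (hSclique m hm m' hm' hne)
  -- inside intervals per block
  set k : ℕ → Finset (Fin t) :=
    fun m => Finset.univ.filter (fun a : Fin t => bl a = br a ∧ bl a = m) with hkdef
  set M : ℕ := S.sup (fun m => (k m).card) with hMdef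
  -- counting
  have hsplit : (Finset.univ.filter (fun a : Fin t => bl a = br a)).card
      + (Finset.univ.filter (fun a : Fin t => ¬ bl a = br a)).card = t := by
    rw [Finset.card_filter_add_card_filter_not]
    simp
  have hcross : (Finset.univ.filter (fun a : Fin t => ¬ bl a = br a)).card ≤ q := by
    have := Finset.card_le_card_of_injOn (s := Finset.univ.filter (fun a : Fin t => ¬ bl a = br a))
      (t := Finset.range q) bl (fun a _ => Finset.mem_range.2 (hblq a)) ?_
    · simpa using this
    · intro a ha b hb hab
      simp only [Finset.coe_filter, Set.mem_setOf_eq] at ha hb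
      by_contra hne
      have key : ∀ x y : Fin t, x < y → ¬ bl x = br x → bl x < bl y := by
        intro x y hxy hx
        have h1 : bl x < br x := lt_of_le_of_ne (hblbr x) hx
        have h2 : br x ≤ bl y := Nat.div_le_div_right (le_of_lt (hhilo x y hxy))
        omega
      rcases Ne.lt_or_gt hne with hlt' | hlt'
      · exact absurd hab (Nat.ne_of_lt (key a b hlt' ha.2))
      · exact absurd hab.symm (Nat.ne_of_lt (key b a hlt' hb.2))
  have hbi : Finset.univ.filter (fun a : Fin t => bl a = br a) = S.biUnion k := by
    ext a
    constructor
    · intro ha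
      rw [Finset.mem_filter] at ha
      rw [Finset.mem_biUnion]
      refine ⟨bl a, ?_, ?_⟩
      · rw [hSdef, Finset.mem_image]
        exact ⟨a, Finset.mem_filter.2 ⟨Finset.mem_univ _, ha.2⟩, rfl⟩
      · rw [hkdef]
        exact Finset.mem_filter.2 ⟨Finset.mem_univ _, ha.2, rfl⟩
    · intro ha
      rw [Finset.mem_biUnion] at ha
      obtain ⟨m, _, hm⟩ := ha
      rw [hkdef] at hm
      have := (Finset.mem_filter.1 hm).2
      exact Finset.mem_filter.2 ⟨Finset.mem_univ _, this.1⟩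
  have hinside : (Finset.univ.filter (fun a : Fin t => bl a = br a)).card ≤ S.card * M := by
    rw [hbi, Finset.card_biUnion]
    · calc ∑ m ∈ S, (k m).card ≤ S.card • M := by
            apply Finset.sum_le_card_nsmul
            intro m hm
            exact Finset.le_sup (f := fun m => (k m).card) hm
        _ = S.card * M := by simp [smul_eq_mul]
    · intro m hm m' hm' hne
      rw [Function.onFun, Finset.disjoint_left]
      intro a ha ha'
      rw [hkdef] at ha ha'
      simp at ha ha'
      omega
  -- case on M
  rcases Nat.eq_zero_or_pos M with hM0 | hMpos
  · -- no inside interval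
    refine ⟨1, ?_, ?_⟩
    · exact ⟨true, fun _ => ⟨0, one_pos⟩, monotone_const,
        fun b => ⟨⟨0, hQpos⟩, Subsingleton.elim _ _⟩,
        fun a b hab => absurd (Subsingleton.elim a b) hab⟩
    · have hie : Finset.univ.filter (fun a : Fin t => bl a = br a) = ∅ := by
        rw [Finset.eq_empty_iff_forall_notMem]
        intro a ha
        rw [Finset.mem_filter] at ha
        have haS : bl a ∈ S := by
          rw [hSdef, Finset.mem_image]
          exact ⟨a, by simp [ha.2], rfl⟩
        have h1 : (k (bl a)).card ≤ M := hMdef ▸ Finset.le_sup (f := fun m => (k m).card) haS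
        have h2 : a ∈ k (bl a) := by
          rw [hkdef]; simp [ha.2]
        have h3 : 0 < (k (bl a)).card := Finset.card_pos.2 ⟨a, h2⟩
        omega
      rw [hie] at hsplit
      simp at hsplit
      omega
  · -- the block with the most inside intervals
    have hSne : S.Nonempty := by
      rcases Finset.eq_empty_or_nonempty S with he | hne
      · exfalso
        rw [hMdef, he, Finset.sup_empty] at hMpos
        simp at hMpos
      · exact hne
    obtain ⟨m0, hm0S, hm0⟩ := Finset.exists_mem_eq_sup S hSne (fun m => (k m).card)
    set A : Finset (Fin t) := k m0 with hAdef
    have hAcard : A.card = M := by rw [hAdef, hMdef, hm0]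
    have hm0q : m0 < q := hSlt m0 hm0S
    have hAmem : ∀ a ∈ A, bl a = br a ∧ bl a = m0 := by
      intro a ha; rw [hAdef, hkdef] at ha; simpa using ha
    have hAdiv : ∀ a ∈ A, ∀ u ∈ F a, (u : ℕ) / q ^ J = m0 := by
      intro a ha u hu
      rw [hins a (hAmem a ha).1 u hu]
      exact (hAmem a ha).2
    set r : Fin t → ℕ := fun a => (A.filter (fun a' => a' < a)).card with hrdef
    have hrlt : ∀ a ∈ A, r a < M := by
      intro a ha
      rw [← hAcard, hrdef]
      apply Finset.card_lt_card
      constructor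
      · exact Finset.filter_subset _ _
      · intro hsub
        have := hsub ha
        simp at this
    have hrmono : ∀ a b : Fin t, a ∈ A → b ∈ A → a < b → r a < r b := by
      intro a b ha hb hab
      rw [hrdef]
      apply Finset.card_lt_card
      constructor
      · intro x hx
        rw [Finset.mem_filter] at hx ⊢
        exact ⟨hx.1, lt_trans hx.2 hab⟩
      · intro hsub
        have := hsub (Finset.mem_filter.2 ⟨ha, hab⟩)
        simp at this
    have hrinj : ∀ a ∈ A, ∀ b ∈ A, r a = r b → a = b := by
      intro a ha b hb hr
      by_contra hne
      rcases Ne.lt_or_gt hne with h | h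
      · exact absurd hr (Nat.ne_of_lt (hrmono a b ha hb h))
      · exact absurd hr.symm (Nat.ne_of_lt (hrmono b a hb ha h))
    have himg : A.image r = Finset.range M := by
      apply Finset.eq_of_subset_of_card_le
      · intro b hb
        rw [Finset.mem_image] at hb
        obtain ⟨a, ha, rfl⟩ := hb
        exact Finset.mem_range.2 (hrlt a ha)
      · rw [Finset.card_range, Finset.card_image_of_injOn fun a ha b hb => hrinj a ha b hb, hAcard]
    have hrsurj : ∀ β : Fin M, ∃ a ∈ A, r a = (β : ℕ) := by
      intro β
      have : (β : ℕ) ∈ Finset.range M := Finset.mem_range.2 β.isLt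
      rw [← himg, Finset.mem_image] at this
      exact this
    -- key counting claim
    have hkey : ∀ a ∈ A, ∀ u : Fin (q ^ (J + 1)), u ∈ F a →
        (A.filter (fun a' => lo a' ≤ (u : ℕ))).card = r a + 1 := by
      intro a ha u hu
      have h1 : A.filter (fun a' => lo a' ≤ (u : ℕ)) = insert a (A.filter (fun a' => a' < a)) := by
        ext a'
        simp only [Finset.mem_filter, Finset.mem_insert]
        constructor
        · rintro ⟨haA', hle⟩
          rcases lt_trichotomy a' a with hlt' | heq | hgt
          · exact Or.inr ⟨haA', hlt'⟩
          · exact Or.inl heq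
          · exfalso
            have h2 : (u : ℕ) ≤ hi a := (hlohi a u hu).2
            have h3 : hi a < lo a' := hhilo a a' hgt
            omega
        · rintro (rfl | ⟨haA', hlt'⟩)
          · exact ⟨ha, (hlohi a' u hu).1⟩
          · refine ⟨haA', ?_⟩
            have h2 : hi a' < lo a := hhilo a' a hlt'
            have h3 : lo a' ≤ hi a' := (hlohi a' _ (Finset.max'_mem _ _)).1
            have h4 : lo a ≤ (u : ℕ) := (hlohi a u hu).1
            omega
      rw [h1, Finset.card_insert_of_notMem (by simp), hrdef]
    -- the map g
    have hgbound : ∀ x : ℕ, (A.filter (fun a => lo a ≤ m0 * q ^ J + x)).card - 1 < M := by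
      intro x
      have h1 : (A.filter (fun a => lo a ≤ m0 * q ^ J + x)).card ≤ M := by
        rw [← hAcard]; exact Finset.card_filter_le _ _
      omega
    set g : Fin (q ^ J) → Fin M :=
      fun x => ⟨(A.filter (fun a => lo a ≤ m0 * q ^ J + (x : ℕ))).card - 1, hgbound _⟩ with hgdef
    -- g at points of fibers of A
    have hgval : ∀ (a : Fin t) (ha : a ∈ A), ∀ u : Fin (q ^ (J + 1)), u ∈ F a →
        ∀ x : Fin (q ^ J), (x : ℕ) = (u : ℕ) % q ^ J → g x = ⟨r a, hrlt a ha⟩ := by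
      intro a ha u hu x hx
      have hdiv : (u : ℕ) / q ^ J = m0 := hAdiv a ha u hu
      have hu' : m0 * q ^ J + (x : ℕ) = (u : ℕ) := by
        rw [hx, ← hdiv]
        exact (hdec u).symm
      rw [hgdef]
      apply Fin.ext
      simp only
      rw [hu', hkey a ha u hu]
      simp
    refine ⟨M, ⟨col, g, ?_, ?_, ?_⟩, ?_⟩
    · -- monotone
      intro x y hxy
      rw [hgdef]
      simp only [Fin.mk_le_mk]
      have : (A.filter (fun a => lo a ≤ m0 * q ^ J + (x : ℕ))).card
          ≤ (A.filter (fun a => lo a ≤ m0 * q ^ J + (y : ℕ))).card := by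
        apply Finset.card_le_card
        intro a ha
        rw [Finset.mem_filter] at ha ⊢
        have hxy' : (x : ℕ) ≤ (y : ℕ) := hxy
        exact ⟨ha.1, by omega⟩
      omega
    · -- surjective
      intro β
      obtain ⟨a, ha, hra⟩ := hrsurj β
      have hamem : (F a).min' (hFne a) ∈ F a := Finset.min'_mem _ _
      have hdiv : lo a / q ^ J = m0 := by
        rw [hlodef]
        exact hAdiv a ha _ hamem
      refine ⟨⟨lo a % q ^ J, Nat.mod_lt _ hQpos⟩, ?_⟩
      have := hgval a ha _ hamem ⟨lo a % q ^ J, Nat.mod_lt _ hQpos⟩ rfl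
      rw [this]
      apply Fin.ext
      simp [hra]
    · -- edges
      intro α β hab
      obtain ⟨a, ha, hra⟩ := hrsurj α
      obtain ⟨b, hb, hrb⟩ := hrsurj β
      have habne : a ≠ b := by
        intro e
        apply hab
        apply Fin.ext
        rw [← hra, ← hrb, e]
      obtain ⟨u, v, hu, hv, hcuv⟩ := hedge a b habne
      have huF : u ∈ F a := (hmemF a u).2 hu
      have hvF : v ∈ F b := (hmemF b v).2 hv
      have hud : (u : ℕ) / q ^ J = m0 := hAdiv a ha u huF
      have hvd : (v : ℕ) / q ^ J = m0 := hAdiv b hb v hvF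
      refine ⟨⟨(u : ℕ) % q ^ J, hmodlt u⟩, ⟨(v : ℕ) % q ^ J, hmodlt v⟩, ?_, ?_, ?_⟩
      · rw [hgval a ha u huF _ rfl]
        apply Fin.ext
        simp [hra]
      · rw [hgval b hb v hvF _ rfl]
        apply Fin.ext
        simp [hrb]
      · have hne' : (u : ℕ) % q ^ J ≠ (v : ℕ) % q ^ J := by
          intro e
          have : (u : ℕ) = (v : ℕ) := by
            rw [hdec u, hdec v, hud, hvd, e]
          have : u = v := Fin.ext this
          rw [this, hv] at hu
          exact habne hu.symm
        have h5 := lexColor_inside q hq c J m0 ((u : ℕ) % q ^ J) ((v : ℕ) % q ^ J)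
          hJ hm0q (hmodlt u) (hmodlt v) hne'
        have e1 : m0 * q ^ J + (u : ℕ) % q ^ J = (u : ℕ) := by
          rw [← hud]; exact (hdec u).symm
        have e2 : m0 * q ^ J + (v : ℕ) % q ^ J = (v : ℕ) := by
          rw [← hvd]; exact (hdec v).symm
        rw [e1, e2] at h5
        show lexColor q c J ((u : ℕ) % q ^ J) ((v : ℕ) % q ^ J) = col
        rw [← h5]
        exact hcuv
    · -- the bound
      calc t = (Finset.univ.filter (fun a : Fin t => bl a = br a)).card
            + (Finset.univ.filter (fun a : Fin t => ¬ bl a = br a)).card := hsplit.symm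
        _ ≤ S.card * M + q := by omega
        _ ≤ s * M + q := by
            have : S.card * M ≤ s * M := Nat.mul_le_mul_right M (by omega)
            omega


/-- **Iterated lexicographic substitutions have small monochromatic complete
interval minors.**  Let `q ≥ 2` and let `c` be a symmetric 2-coloring of the
edges of the ordered complete graph `K_q` with no monochromatic clique of size
`s`.  If `f(i)` denotes the maximum size of a monochromatic complete interval
minor of the iterated lexicographic coloring of `K_{q^i}`, then
`f(i) ≤ s·f(i−1) + q` for every `i ≥ 2`, and consequently `f(i) ≤ q·s^i` for
every `i ≥ 1`. -/
theorem stmt11 (q s : ℕ) (hq : 2 ≤ q) (c : ℕ → ℕ → Bool)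
    (hsym : ∀ u v : ℕ, c u v = c v u)
    (hnoclique : ∀ (col : Bool) (S : Finset ℕ), (∀ x ∈ S, x < q) →
      s ≤ S.card → ∃ a ∈ S, ∃ b ∈ S, a ≠ b ∧ c a b ≠ col) :
    (∀ i : ℕ, 2 ≤ i → ∀ t : ℕ, HasMonoCIM q c i t →
      ∃ t' : ℕ, HasMonoCIM q c (i - 1) t' ∧ t ≤ s * t' + q) ∧
    (∀ i : ℕ, 1 ≤ i → ∀ t : ℕ, HasMonoCIM q c i t → t ≤ q * s ^ i) := by
  have hs2 : 2 ≤ s := by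
    by_contra hcon
    obtain ⟨a, ha, b, hb, hab, _⟩ := hnoclique true {0}
      (by intro x hx; simp at hx; omega) (by simp; omega)
    simp at ha hb
    omega
  have part1 : ∀ i : ℕ, 2 ≤ i → ∀ t : ℕ, HasMonoCIM q c i t →
      ∃ t' : ℕ, HasMonoCIM q c (i - 1) t' ∧ t ≤ s * t' + q := by
    intro i hi t ht
    obtain ⟨J, rfl⟩ : ∃ J, i = J + 1 := ⟨i - 1, by omega⟩
    simp only [Nat.add_sub_cancel]
    exact step q s hq c hnoclique J t (by omega) ht
  refine ⟨part1, ?_⟩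
  have key : ∀ i : ℕ, 1 ≤ i → ∀ t : ℕ, HasMonoCIM q c i t → t + q ≤ q * s ^ i := by
    intro i
    induction i with
    | zero => omega
    | succ n ih =>
      intro _ t ht
      rcases Nat.eq_zero_or_pos n with rfl | hn
      · obtain ⟨col, f, _, hsurj, _⟩ := ht
        have h1 : t ≤ q := by
          have := Fintype.card_le_of_surjective f hsurj
          simpa using this
        have h2 : q * s ^ (0 + 1) = s * q := by ring
        have h3 : 2 * q ≤ s * q := Nat.mul_le_mul_right q hs2
        omega
      · obtain ⟨t', ht', hle⟩ := part1 (n + 1) (by omega) t ht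
        simp only [Nat.add_sub_cancel] at ht'
        have h2 := ih (by omega) t' ht'
        have h4 : s * t' + s * q ≤ s * (q * s ^ n) := by
          have h := Nat.mul_le_mul_left s h2
          rw [Nat.mul_add] at h
          exact h
        have h5 : s * (q * s ^ n) = q * s ^ (n + 1) := by ring
        have h6 : 2 * q ≤ s * q := Nat.mul_le_mul_right q hs2
        omega
  intro i hi t ht
  have := key i hi t ht
  omega
end

section
/- Suppose a class C_r of ordered graphs has the property that every member contains a looped K_t interval minor, and suppose (G, <) has a refined quotient of type R'R' lying in C_r (as in the delayed-rank decomposition). If H is that refined quotient and I_1 < ... < I_t is a looped K_t interval minor model in H where every interval contains a vertex of type R (i.e., a vertex with a neighbor to the right of V(H) in G), then (G, <) contains a right-lazy looped K_{t+1} interval minor, witnessed by appending the interval {x ∈ V(G) : V(H) < x}. -/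
/-- **Extending a looped `K_t` model of a refined quotient of type `R'R'`.**
Let `(G, <)` be a finite ordered graph, and let `H` be a subgraph of `G`
induced on a set `W` of vertices (e.g. a refined quotient of type `R'R'`
belonging to a class all of whose members contain looped `K_t` interval
minors).  Suppose `I_1 < … < I_t` is a looped `K_t` interval minor model in `H`
(encoded by a monotone surjection `f : W → Fin t`, with an edge of `G` between
any two distinct intervals and an edge inside each interval) in which every
interval contains a vertex of type `R`, i.e. a vertex having a `G`-neighbor
strictly to the right of all of `W`.  Then `(G, <)` contains a right-lazy
looped `K_{t+1}` interval minor, witnessed by appending the interval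
`{x : V(G) : W < x}`. -/
theorem stmt17 {V : Type*} [Fintype V] [LinearOrder V] (G : SimpleGraph V)
    (t : ℕ) (ht : 1 ≤ t) (W : Set V)
    (f : {v : V // v ∈ W} → Fin t) (hmono : Monotone f)
    (hsurj : Function.Surjective f)
    (hedges : ∀ i j : Fin t, i ≠ j → ∃ u v : {v : V // v ∈ W},
      f u = i ∧ f v = j ∧ G.Adj (u : V) (v : V))
    (hloops : ∀ i : Fin t, ∃ u v : {v : V // v ∈ W},
      f u = i ∧ f v = i ∧ G.Adj (u : V) (v : V))
    (htypeR : ∀ i : Fin t, ∃ w : {v : V // v ∈ W}, f w = i ∧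
      ∃ y : V, (∀ z : {v : V // v ∈ W}, (z : V) < y) ∧ G.Adj (w : V) y) :
    ∃ g : V → Fin (t + 1), Monotone g ∧ Function.Surjective g ∧
      (∀ i j : Fin (t + 1), i ≠ j → ∃ u v : V, g u = i ∧ g v = j ∧ G.Adj u v) ∧
      (∀ i : Fin (t + 1), i ≠ Fin.last t →
        ∃ u v : V, g u = i ∧ g v = i ∧ G.Adj u v) ∧
      (∀ x : V, (∀ z : {v : V // v ∈ W}, (z : V) < x) → g x = Fin.last t) := by
  classical
  haveI : Fintype {v : V // v ∈ W} := Fintype.ofFinite _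
  set S : V → Finset {v : V // v ∈ W} :=
    fun x => Finset.univ.filter fun z => x ≤ (z : V) with hS
  set g : V → Fin (t + 1) :=
    fun x => if h : (S x).Nonempty then (f ((S x).min' h)).castSucc
      else Fin.last t with hg
  have hSmem : ∀ (u : {v : V // v ∈ W}), u ∈ S (u : V) := by
    intro u; simp [hS]
  have hgW : ∀ (u : {v : V // v ∈ W}), g (u : V) = (f u).castSucc := by
    intro u
    have hne : (S (u : V)).Nonempty := ⟨u, hSmem u⟩
    simp only [hg, dif_pos hne]
    congr 1
    have h1 : (S (u : V)).min' hne ≤ u := Finset.min'_le _ _ (hSmem u)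
    have h2 : (u : V) ≤ (((S (u : V)).min' hne : {v : V // v ∈ W}) : V) := by
      have := (S (u : V)).min'_mem hne
      simp only [hS, Finset.mem_filter] at this; exact this.2
    exact congrArg f (le_antisymm h1 h2)
  have hlast : ∀ x : V, (∀ z : {v : V // v ∈ W}, (z : V) < x) → g x = Fin.last t := by
    intro x hx
    have hempty : ¬ (S x).Nonempty := by
      rintro ⟨z, hz⟩
      have : x ≤ (z : V) := by simpa [hS] using hz
      exact absurd (hx z) (not_lt.mpr this)
    simp [hg, dif_neg hempty]
  refine ⟨g, ?_, ?_, ?_, ?_, hlast⟩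
  · -- monotone
    intro x y hxy
    by_cases hy : (S y).Nonempty
    · have hsub : S y ⊆ S x := by
        intro z hz
        simp only [hS, Finset.mem_filter, Finset.mem_univ, true_and] at hz ⊢
        exact le_trans hxy hz
      have hx : (S x).Nonempty := ⟨hy.choose, hsub hy.choose_spec⟩
      have hmin : (S x).min' hx ≤ (S y).min' hy :=
        Finset.min'_le _ _ (hsub ((S y).min'_mem hy))
      simp only [hg, dif_pos hx, dif_pos hy]
      exact Fin.castSucc_le_castSucc_iff.mpr (hmono hmin)
    · simp only [hg, dif_neg hy]
      exact Fin.le_last _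
  · -- surjective
    intro i
    by_cases hi : i = Fin.last t
    · obtain ⟨w, -, y, hy, -⟩ := htypeR ⟨0, ht⟩
      exact ⟨y, by rw [hlast y hy, hi]⟩
    · obtain ⟨j, rfl⟩ := Fin.exists_castSucc_eq.2 hi
      obtain ⟨u, hu⟩ := hsurj j
      exact ⟨u, by rw [hgW u, hu]⟩
  · -- edges
    intro i j hij
    by_cases hi : i = Fin.last t
    · have hj : j ≠ Fin.last t := fun h => hij (hi.trans h.symm)
      obtain ⟨j', rfl⟩ := Fin.exists_castSucc_eq.2 hj
      obtain ⟨w, hw, y, hy, hadj⟩ := htypeR j'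
      exact ⟨y, w, by rw [hlast y hy, hi], by rw [hgW w, hw], hadj.symm⟩
    · obtain ⟨i', rfl⟩ := Fin.exists_castSucc_eq.2 hi
      by_cases hj : j = Fin.last t
      · obtain ⟨w, hw, y, hy, hadj⟩ := htypeR i'
        exact ⟨w, y, by rw [hgW w, hw], by rw [hlast y hy, hj], hadj⟩
      · obtain ⟨j', rfl⟩ := Fin.exists_castSucc_eq.2 hj
        have : i' ≠ j' := fun h => hij (by rw [h])
        obtain ⟨u, v, hu, hv, hadj⟩ := hedges i' j' this
        exact ⟨u, v, by rw [hgW u, hu], by rw [hgW v, hv], hadj⟩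
  · -- loops
    intro i hi
    obtain ⟨i', rfl⟩ := Fin.exists_castSucc_eq.2 hi
    obtain ⟨u, v, hu, hv, hadj⟩ := hloops i'
    exact ⟨u, v, by rw [hgW u, hu], by rw [hgW v, hv], hadj⟩
end
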